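/- arXiv:1404.2824 — 10 statements merged into one kernel-verified Lean document; each statement's English description precedes it below -/
import Mathlib

section
/- There exists a constant C > 0 such that for all n ≥ 2, the number pnw(n) of prefix normal binary words of length n satisfies pnw(n) ≤ C · 2^n · (ln n)^2 / n. In particular, pnw(n) = o(2^n). -/
/-- A binary word (list of Booleans, `true` = 1) is prefix normal if no substring
has more 1s than the prefix of the same length. -/
def IsPrefixNormal (w : List Bool) : Prop :=
  ∀ u : List Bool, u <:+: w → u.count true ≤ (w.take u.length).count true

/-- The number of prefix normal words of length `n`. -/
noncomputable def pnw (n : ℕ) : ℕ :=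
  Nat.card {w : List Bool // w.length = n ∧ IsPrefixNormal w}

namespace PNWaux

/-- Words of length `n - (a+1)` with no all-ones block among the first blocks of size `a+1`. -/
def V (n a : ℕ) : Set (List Bool) :=
  {v | v.length = n - (a+1) ∧ ∀ j < (n - (a+1)) / (a+1),
      (v.drop (j*(a+1))).take (a+1) ≠ List.replicate (a+1) true}

def G (n a : ℕ) : Set (List Bool) :=
  (fun v => List.replicate a true ++ false :: v) '' V n a

lemma V_finite (n a : ℕ) : (V n a).Finite :=
  (List.finite_length_eq Bool (n - (a+1))).subset fun _ hv => hv.1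

lemma structure_lemma (n : ℕ) :
    {w : List Bool | w.length = n ∧ IsPrefixNormal w} ⊆
      insert (List.replicate n true) (⋃ a ∈ Finset.range n, G n a) := by
  rintro w ⟨hlen, hpn⟩
  by_cases hall : w = List.replicate n true
  · exact Set.mem_insert_iff.mpr (Or.inl hall)
  right
  set a := (w.takeWhile id).length with ha
  have htw : w.takeWhile id = List.replicate a true := by
    apply List.eq_replicate_of_mem
    intro b hb
    simpa using List.mem_takeWhile_imp hb
  have hdw : w.dropWhile id ≠ [] := by
    intro h
    apply hall
    have := List.takeWhile_append_dropWhile (p := id) (l := w)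
    rw [h, List.append_nil, htw] at this
    rw [← this] at hlen ⊢
    rw [List.length_replicate] at hlen
    rw [hlen]
  have hhead : (w.dropWhile id).head hdw = false := by
    have := List.head_dropWhile_not id hdw
    simpa using this
  set v := (w.dropWhile id).tail with hv
  have hw : w = List.replicate a true ++ false :: v := by
    conv_lhs => rw [← List.takeWhile_append_dropWhile (p := id) (l := w)]
    rw [htw, ← List.cons_head_tail hdw, hhead]
  have hw2 : w = (List.replicate a true ++ [false]) ++ v := by rw [hw]; simp
  have hlenP : (List.replicate a true ++ [false]).length = a + 1 := by simp
  have hvdrop : w.drop (a+1) = v := by rw [hw2, ← hlenP, List.drop_left]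
  have hlen2 : n = a + 1 + v.length := by rw [← hlen, hw2]; simp; omega
  have han : a < n := by omega
  have hvlen : v.length = n - (a+1) := by omega
  have htake : w.take (a+1) = List.replicate a true ++ [false] := by
    rw [hw2]; exact List.take_left' hlenP
  simp only [Set.mem_iUnion]
  refine ⟨a, Finset.mem_range.mpr han, v, ⟨hvlen, ?_⟩, hw.symm⟩
  intro j hj heq
  have h1 : (v.drop (j*(a+1))).take (a+1) <:+: w := by
    rw [← hvdrop, List.drop_drop]
    exact (List.take_prefix _ _).isInfix.trans (List.drop_suffix _ _).isInfix
  have h2 := hpn _ h1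
  rw [heq] at h2
  simp only [List.count_replicate, List.length_replicate, htake] at h2
  simp [List.count_append] at h2

lemma ncard_V_le (n a : ℕ) :
    (V n a).ncard ≤ (2^(a+1) - 1)^((n - (a+1)) / (a+1)) * 2^((n - (a+1)) % (a+1)) := by
  set k := a + 1 with hk
  set m := n - k with hm
  set q := m / k with hq
  set r := m % k with hr
  have hk0 : 0 < k := Nat.succ_pos a
  have hqk : q * k + r = m := by rw [hq, hr]; rw [Nat.mul_comm]; exact Nat.div_add_mod m k
  -- the injection into (blocks, remainder)
  have hbound1 : ∀ (j : Fin q) (s : Fin k) (v : List Bool), v ∈ V n a →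
      j.1 * k + s.1 < v.length := by
    rintro j s v hv
    rcases hv with ⟨hlen, -⟩
    have h1 : (j.1 + 1) * k ≤ q * k := Nat.mul_le_mul_right k j.2
    have h2 : (j.1 + 1) * k = j.1 * k + k := by ring
    have h3 := s.2
    rw [hlen]
    omega
  have hbound2 : ∀ (i : Fin r) (v : List Bool), v ∈ V n a → q * k + i.1 < v.length := by
    rintro i v ⟨hlen, -⟩
    have := i.2
    rw [hlen]; omega
  classical
  set F : V n a → (Fin q → {g : Fin k → Bool // g ≠ fun _ => true}) × (Fin r → Bool) :=
    fun v => (fun j => ⟨fun s => v.1[j.1 * k + s.1]'(hbound1 j s v.1 v.2), by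
      -- block is not all ones
      intro hgeq
      rcases v.2 with ⟨hlen, hblocks⟩
      apply hblocks j.1 j.2
      have h1 : (j.1 + 1) * k ≤ q * k := Nat.mul_le_mul_right k j.2
      have h2 : (j.1 + 1) * k = j.1 * k + k := by ring
      have h3 : q * k ≤ m := by omega
      have h4 : j.1 * k = j.1 * (a+1) := by rw [hk]
      rw [List.eq_replicate_iff]
      constructor
      · rw [List.length_take, List.length_drop, hlen]; omega
      intro b hb
      rw [List.mem_iff_getElem] at hb
      rcases hb with ⟨s, hs, hsb⟩
      have hsk : s < k := by
        rw [List.length_take] at hs; omega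
      rw [List.getElem_take, List.getElem_drop] at hsb
      have := congrFun hgeq ⟨s, hsk⟩
      simp only at this
      rw [← hsb]; exact this⟩,
    fun i => v.1[q * k + i.1]'(hbound2 i v.1 v.2)) with hF
  have hFinj : Function.Injective F := by
    rintro v v' hvv
    have h1 := congrArg Prod.fst hvv
    have h2 := congrArg Prod.snd hvv
    apply Subtype.ext
    apply List.ext_getElem
    · rw [v.2.1, v'.2.1]
    intro i hi hi'
    have him : i < m := by have := v.2.1; omega
    rcases Nat.lt_or_ge i (q * k) with hcase | hcase
    · have hj : i / k < q := Nat.div_lt_of_lt_mul (Nat.mul_comm q k ▸ hcase)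
      have hs : i % k < k := Nat.mod_lt _ hk0
      have hkey := congrFun (congrArg Subtype.val (congrFun h1 ⟨i / k, hj⟩)) ⟨i % k, hs⟩
      simp only [hF] at hkey
      have hi2 : i / k * k + i % k = i := by rw [Nat.mul_comm]; exact Nat.div_add_mod i k
      simpa only [hi2] using hkey
    · have hir : i - q * k < r := by omega
      have hkey := congrFun h2 ⟨i - q * k, hir⟩
      simp only [hF] at hkey
      have hi2 : q * k + (i - q * k) = i := by omega
      simpa only [hi2] using hkey
  calc (V n a).ncard = Nat.card (V n a) := rfl
  _ ≤ Nat.card ((Fin q → {g : Fin k → Bool // g ≠ fun _ => true}) × (Fin r → Bool)) :=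
      Nat.card_le_card_of_injective F hFinj
  _ = (2^k - 1)^q * 2^r := by
      rw [Nat.card_eq_fintype_card, Fintype.card_prod, Fintype.card_fun, Fintype.card_fun]
      have hB : Fintype.card {g : Fin k → Bool // g ≠ fun _ => true} = 2^k - 1 := by
        simp only [Ne]
        rw [Fintype.card_subtype_compl, Fintype.card_subtype_eq]
        simp
      rw [hB]; simp

lemma ncard_biUnion_le {α : Type*} (s : Finset ℕ) (f : ℕ → Set α) :
    (⋃ a ∈ s, f a).ncard ≤ ∑ a ∈ s, (f a).ncard := by
  classical
  induction s using Finset.induction with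
  | empty => simp
  | insert _ _ h ih =>
      rename_i a s'
      rw [Finset.set_biUnion_insert, Finset.sum_insert h]
      exact (Set.ncard_union_le _ _).trans (Nat.add_le_add_left ih _)

lemma pnw_le (n : ℕ) :
    pnw n ≤ 1 + ∑ a ∈ Finset.range n,
      (2^(a+1) - 1)^((n - (a+1)) / (a+1)) * 2^((n - (a+1)) % (a+1)) := by
  classical
  have hfin : ∀ a, (G n a).Finite := fun a => (V_finite n a).image _
  have hTfin : (⋃ a ∈ Finset.range n, G n a).Finite :=
    Set.Finite.biUnion (Finset.range n).finite_toSet (fun a _ => hfin a)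
  have h1 : pnw n = {w : List Bool | w.length = n ∧ IsPrefixNormal w}.ncard := rfl
  rw [h1]
  calc {w : List Bool | w.length = n ∧ IsPrefixNormal w}.ncard
      ≤ (insert (List.replicate n true) (⋃ a ∈ Finset.range n, G n a)).ncard :=
      Set.ncard_le_ncard (structure_lemma n) (hTfin.insert _)
  _ ≤ (⋃ a ∈ Finset.range n, G n a).ncard + 1 := Set.ncard_insert_le _ _
  _ ≤ (∑ a ∈ Finset.range n, (G n a).ncard) + 1 :=
      Nat.add_le_add_right (ncard_biUnion_le _ _) 1
  _ ≤ (∑ a ∈ Finset.range n,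
        (2^(a+1) - 1)^((n - (a+1)) / (a+1)) * 2^((n - (a+1)) % (a+1))) + 1 := by
      apply Nat.add_le_add_right
      apply Finset.sum_le_sum
      intro a _
      exact (Set.ncard_image_le (V_finite n a)).trans (ncard_V_le n a)
  _ = _ := by omega

lemma step1 (n a : ℕ) :
    (2^(a+1) - 1)^((n-(a+1))/(a+1)) * 2^((n-(a+1)) % (a+1)) ≤ 2^(n-1-a) := by
  set k := a + 1
  set m := n - k with hm
  calc (2^k - 1)^(m/k) * 2^(m % k) ≤ (2^k)^(m/k) * 2^(m % k) :=
        Nat.mul_le_mul_right _ (Nat.pow_le_pow_left (Nat.sub_le _ _) _)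
  _ = 2^(k * (m/k) + m % k) := by rw [← pow_mul, ← pow_add]
  _ = 2^m := by rw [Nat.div_add_mod]
  _ = 2^(n-1-a) := by congr 1; omega

lemma step2 (n a : ℕ) (ha : a < n) (hn : 1 ≤ n) :
    (((2^(a+1) - 1)^((n-(a+1))/(a+1)) * 2^((n-(a+1)) % (a+1)) : ℕ) : ℝ) ≤
      Real.exp 1 * 2^n * (a+1) / n := by
  set k := a + 1 with hk
  set m := n - k with hm
  set q := m / k with hq
  set r := m % k with hr
  have hkn : k ≤ n := ha
  have hmk : m + k = n := by omega
  have hqk : k * q + r = m := Nat.div_add_mod m k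
  have hrk : r < k := Nat.mod_lt _ (Nat.succ_pos a)
  have hcast : (((2^k - 1)^q * 2^r : ℕ) : ℝ) = ((2:ℝ)^k - 1)^q * 2^r := by
    push_cast [Nat.cast_sub (Nat.one_le_two_pow)]
    norm_num
  rw [hcast]
  set x : ℝ := ((2:ℝ)^k)⁻¹ with hx
  have h2k : (0:ℝ) < 2^k := by positivity
  have hx0 : 0 < x := by positivity
  have hx12 : x ≤ 1/2 := by
    rw [hx]
    rw [inv_le_comm₀ h2k (by norm_num)]
    norm_num
    calc (2:ℝ) = 2^1 := (pow_one 2).symm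
    _ ≤ 2^k := by apply pow_le_pow_right₀ (by norm_num); omega
  have hfact : ((2:ℝ)^k - 1) = 2^k * (1 - x) := by
    rw [hx]; field_simp
  have h1x : (1 - x) ≤ Real.exp (-x) := by
    have := Real.add_one_le_exp (-x); linarith
  have h1x0 : (0:ℝ) ≤ 1 - x := by linarith
  have hpow : ((2:ℝ)^k - 1)^q ≤ (2^k)^q * Real.exp (-(q * x)) := by
    rw [hfact, mul_pow]
    apply mul_le_mul_of_nonneg_left _ (by positivity)
    calc (1 - x)^q ≤ Real.exp (-x)^q := pow_le_pow_left₀ h1x0 h1x q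
    _ = Real.exp (-(q * x)) := by
        rw [← Real.exp_nat_mul]; ring_nf
  -- main exponential estimate
  have hn0 : (0:ℝ) < n := by exact_mod_cast hn
  have hk0 : (0:ℝ) < k := by positivity
  have hqreal : (n:ℝ)/k - 2 ≤ (q:ℝ) := by
    have h1 : (k:ℝ) * q + r = m := by exact_mod_cast hqk
    have h2 : (m:ℝ) + k = n := by exact_mod_cast hmk
    have h3 : (r:ℝ) < k := by exact_mod_cast hrk
    rw [sub_le_iff_le_add, div_le_iff₀ hk0]
    nlinarith
  have hy : (0:ℝ) < x * n / k := by positivity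
  have hexp1 : Real.exp (-(q * x)) ≤ Real.exp (2 * x) * Real.exp (-(x * n / k)) := by
    rw [← Real.exp_add]
    apply Real.exp_le_exp.mpr
    have h4 : x * ((n:ℝ)/k - 2) ≤ x * q := mul_le_mul_of_nonneg_left hqreal (le_of_lt hx0)
    have h5 : x * ((n:ℝ)/k) = x * n / k := by ring
    nlinarith
  have hexp2 : Real.exp (2 * x) ≤ Real.exp 1 :=
    Real.exp_le_exp.mpr (by linarith)
  have hexp3 : Real.exp (-(x * n / k)) ≤ k / (x * n) := by
    have hy1 : x * n / k ≤ Real.exp (x * n / k) := by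
      have := Real.add_one_le_exp (x * n / k); linarith
    rw [Real.exp_neg]
    calc (Real.exp (x * n / k))⁻¹ ≤ (x * n / k)⁻¹ := by
          apply inv_anti₀ hy hy1
    _ = k / (x * n) := by field_simp
  have hfinal : ((2:ℝ)^k)^q * 2^r = 2^n * x := by
    rw [hx, ← pow_mul, ← pow_add]
    have h6 : k * q + r + k = n := by omega
    rw [← h6, pow_add, pow_add]
    field_simp
    rw [pow_add]
  calc ((2:ℝ)^k - 1)^q * 2^r ≤ ((2^k)^q * Real.exp (-(q * x))) * 2^r := by
        apply mul_le_mul_of_nonneg_right hpow (by positivity)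
  _ = ((2:ℝ)^k)^q * 2^r * Real.exp (-(q * x)) := by ring
  _ ≤ ((2:ℝ)^k)^q * 2^r * (Real.exp 1 * (k / (x * n))) := by
        apply mul_le_mul_of_nonneg_left _ (by positivity)
        calc Real.exp (-(q*x)) ≤ Real.exp (2*x) * Real.exp (-(x*n/k)) := hexp1
        _ ≤ Real.exp 1 * (k / (x*n)) := by
            apply mul_le_mul hexp2 hexp3 (le_of_lt (Real.exp_pos _)) (le_of_lt (Real.exp_pos _))
  _ = 2^n * x * (Real.exp 1 * (k / (x * n))) := by rw [hfinal]
  _ = Real.exp 1 * 2^n * (k:ℝ) / n := by field_simp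
  _ = Real.exp 1 * 2^n * (a+1) / n := by push_cast [hk]; ring

lemma real_bound (n : ℕ) (hn : 2 ≤ n) :
    ((1 + ∑ a ∈ Finset.range n,
      (2^(a+1) - 1)^((n - (a+1)) / (a+1)) * 2^((n - (a+1)) % (a+1)) : ℕ) : ℝ)
      ≤ (100 / Real.log 2 ^ 2) * 2 ^ n * (Real.log n) ^ 2 / n := by
  have hn1 : 1 ≤ n := by omega
  set t := Nat.log 2 n with ht
  have htn : t ≤ n := Nat.log_le_self 2 n
  have h2t : 2^t ≤ n := Nat.pow_log_le_self 2 (by omega)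
  have hn2t : n < 2^(t+1) := Nat.lt_pow_succ_log_self (by norm_num) n
  have hn0 : (0:ℝ) < n := by exact_mod_cast hn1
  set L := Real.log n with hLdef
  set l2 := Real.log 2 with hl2def
  have hl2 : 0 < l2 := Real.log_pos (by norm_num)
  have hL : l2 ≤ L := Real.log_le_log (by norm_num) (by exact_mod_cast hn)
  have hL0 : 0 < L := lt_of_lt_of_le hl2 hL
  have htL : (t:ℝ) * l2 ≤ L := by
    calc (t:ℝ) * l2 = Real.log ((2:ℝ)^t) := by rw [Real.log_pow]
    _ ≤ L := Real.log_le_log (by positivity) (by exact_mod_cast h2t)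
  set u := (2:ℝ)^n with hu
  have hu0 : (0:ℝ) < u := by positivity
  have hnu : (n:ℝ) ≤ u := by
    have := Nat.lt_two_pow_self (n := n)
    have h := (Nat.cast_lt (α := ℝ)).mpr this
    push_cast at h
    exact le_of_lt h
  set D := u * L^2 / (l2^2 * n) with hD
  have hD0 : 0 < D := by positivity
  -- cast the sum
  rw [Nat.cast_add, Nat.cast_one, Nat.cast_sum]
  -- split the sum
  rw [← Finset.sum_range_add_sum_Ico _ htn]
  -- part 1
  have part1 : ∑ a ∈ Finset.range t,
      (((2^(a+1) - 1)^((n - (a+1)) / (a+1)) * 2^((n - (a+1)) % (a+1)) : ℕ) : ℝ)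
      ≤ t * (Real.exp 1 * u * t / n) := by
    have := Finset.sum_le_card_nsmul (Finset.range t)
      (fun a => (((2^(a+1) - 1)^((n - (a+1)) / (a+1)) * 2^((n - (a+1)) % (a+1)) : ℕ) : ℝ))
      (Real.exp 1 * u * t / n) ?_
    · simpa [nsmul_eq_mul] using this
    intro a hamem
    have hat : a < t := Finset.mem_range.mp hamem
    have han : a < n := lt_of_lt_of_le hat htn
    calc _ ≤ Real.exp 1 * 2^n * (a+1) / n := step2 n a han hn1
    _ ≤ Real.exp 1 * u * t / n := by
        rw [← hu]
        gcongr
        exact_mod_cast Nat.succ_le_of_lt hat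
  -- part 2
  have part2 : ∑ a ∈ Finset.Ico t n,
      (((2^(a+1) - 1)^((n - (a+1)) / (a+1)) * 2^((n - (a+1)) % (a+1)) : ℕ) : ℝ)
      ≤ (2:ℝ)^(n - t) := by
    calc ∑ a ∈ Finset.Ico t n,
        (((2^(a+1) - 1)^((n - (a+1)) / (a+1)) * 2^((n - (a+1)) % (a+1)) : ℕ) : ℝ)
        ≤ ∑ a ∈ Finset.Ico t n, ((2:ℝ)^(n-1-a : ℕ)) := by
          apply Finset.sum_le_sum
          intro a _
          calc (((2^(a+1) - 1)^((n - (a+1)) / (a+1)) * 2^((n - (a+1)) % (a+1)) : ℕ) : ℝ)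
              ≤ ((2^(n-1-a) : ℕ) : ℝ) := Nat.cast_le.mpr (step1 n a)
          _ = (2:ℝ)^(n-1-a) := by push_cast; ring
    _ = ∑ i ∈ Finset.range (n - t), (2:ℝ)^(n-1-(t+i)) := by
          rw [Finset.sum_Ico_eq_sum_range]
    _ = ∑ i ∈ Finset.range (n - t), (2:ℝ)^((n-t) - 1 - i) := by
          apply Finset.sum_congr rfl
          intro i hi
          congr 1
          omega
    _ = ∑ i ∈ Finset.range (n - t), (2:ℝ)^i :=
          Finset.sum_range_reflect (fun i => (2:ℝ)^i) (n - t)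
    _ = ((2:ℝ)^(n-t) - 1) / (2 - 1) := geom_sum_eq (by norm_num) (n - t)
    _ ≤ (2:ℝ)^(n - t) := by norm_num
  have h2nt : (2:ℝ)^(n - t) ≤ 2 * u / n := by
    have e1 : (2:ℝ)^(n-t) * 2^t = u := by rw [hu, ← pow_add]; congr 1; omega
    have e2 : (n:ℝ) < 2^t * 2 := by
      have h := (Nat.cast_lt (α := ℝ)).mpr hn2t
      push_cast at h
      calc (n:ℝ) < 2^(t+1) := h
      _ = 2^t * 2 := by rw [pow_succ]
    have h2t0 : (0:ℝ) < 2^t := by positivity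
    have hw0 : (0:ℝ) < 2^(n-t:ℕ) := by positivity
    rw [le_div_iff₀ hn0, ← e1]
    nlinarith
  have claim1 : 1 ≤ D := by
    rw [hD, le_div_iff₀ (by positivity)]
    have hsq : l2^2 ≤ L^2 := pow_le_pow_left₀ (le_of_lt hl2) hL 2
    nlinarith
  have claim2 : (t:ℝ) * (Real.exp 1 * u * t / n) ≤ 3 * D := by
    have he : Real.exp 1 ≤ 3 := by
      have := Real.exp_one_lt_d9
      linarith
    have he0 := Real.exp_pos 1
    have ht2 : ((t:ℝ) * l2)^2 ≤ L^2 := pow_le_pow_left₀ (by positivity) htL 2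
    have lhs_eq : (t:ℝ) * (Real.exp 1 * u * t / n) = Real.exp 1 * u * ((t:ℝ)^2) / n := by ring
    have rhs_eq : 3 * D = 3 * (u * L^2) / (l2^2 * n) := by rw [hD]; ring
    rw [lhs_eq, rhs_eq, div_le_div_iff₀ hn0 (by positivity)]
    have key : Real.exp 1 * ((t:ℝ)^2 * l2^2) ≤ 3 * L^2 := by nlinarith [sq_nonneg ((t:ℝ)*l2)]
    nlinarith [mul_le_mul_of_nonneg_right key (le_of_lt (mul_pos hu0 hn0))]
  have claim3 : 2 * u / n ≤ 2 * D := by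
    have hsq : l2^2 ≤ L^2 := pow_le_pow_left₀ (le_of_lt hl2) hL 2
    have rhs_eq : 2 * D = 2 * (u * L^2) / (l2^2 * n) := by rw [hD]; ring
    rw [rhs_eq, div_le_div_iff₀ hn0 (by positivity)]
    have key := mul_le_mul_of_nonneg_right hsq (le_of_lt (mul_pos hu0 hn0))
    linarith [key]
  have hRHS : 100 / l2 ^ 2 * u * L ^ 2 / (n:ℝ) = 100 * D := by
    rw [hD]; field_simp
  rw [hRHS]
  linarith [part1, part2, h2nt, claim1, claim2, claim3, hD0]

end PNWaux

theorem pnw_upper_bound :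
    (∃ C : ℝ, 0 < C ∧ ∀ n : ℕ, 2 ≤ n →
        (pnw n : ℝ) ≤ C * 2 ^ n * (Real.log n) ^ 2 / n) ∧
    Filter.Tendsto (fun n : ℕ => (pnw n : ℝ) / 2 ^ n) Filter.atTop (nhds 0) := by
  have key : ∀ n : ℕ, 2 ≤ n →
      (pnw n : ℝ) ≤ (100 / Real.log 2 ^ 2) * 2 ^ n * (Real.log n) ^ 2 / n := by
    intro n hn
    calc (pnw n : ℝ) ≤ _ := Nat.cast_le.mpr (PNWaux.pnw_le n)
    _ ≤ _ := PNWaux.real_bound n hn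
  have hC : (0:ℝ) < 100 / Real.log 2 ^ 2 := by positivity
  refine ⟨⟨_, hC, key⟩, ?_⟩
  have h0 : Filter.Tendsto (fun x : ℝ => Real.log x ^ 2 / x) Filter.atTop (nhds 0) := by
    simpa using Real.tendsto_pow_log_div_mul_add_atTop 1 0 2 one_ne_zero
  have h1 : Filter.Tendsto (fun n : ℕ => (100 / Real.log 2 ^ 2) * (Real.log n ^ 2 / n))
      Filter.atTop (nhds 0) := by
    simpa using (h0.comp tendsto_natCast_atTop_atTop).const_mul (100 / Real.log 2 ^ 2)
  apply squeeze_zero' (Filter.eventually_atTop.mpr ⟨2, fun n hn => by positivity⟩)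
    (Filter.eventually_atTop.mpr ⟨2, fun n hn => ?_⟩) h1
  have h2 : (0:ℝ) < 2 ^ n := by positivity
  rw [div_le_iff₀ h2]
  calc (pnw n : ℝ) ≤ (100 / Real.log 2 ^ 2) * 2 ^ n * (Real.log n) ^ 2 / n := key n hn
  _ = 100 / Real.log 2 ^ 2 * (Real.log ↑n ^ 2 / ↑n) * 2 ^ n := by ring
end

section
/- Let w be a binary word of density d > 0 starting with 1, written as w = 1 0^(r₁−1) 1 0^(r₂−1) ⋯ 1 0^(r_d−1), where r₁,…,r_{d−1} ≥ 1 are the distances between consecutive occurrences of 1 and r_d ≥ 1 is chosen so that r₁ + r₂ + ⋯ + r_d = |w|. Then w is prefix normal if and only if for every m with 1 ≤ m ≤ d−2 and every j with 2 ≤ j ≤ d−m, we have r₁ + r₂ + ⋯ + r_m ≤ r_j + r_{j+1} + ⋯ + r_{j+m−1}. -/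
open Finset

private def Wd (r : ℕ → ℕ) (d : ℕ) : List Bool :=
  ((List.range d).map (fun i => true :: List.replicate (r (i + 1) - 1) false)).flatten

private def Ps (r : ℕ → ℕ) (k : ℕ) : ℕ := ∑ i ∈ Finset.Icc 1 k, r i

private def fc (r : ℕ → ℕ) (d : ℕ) (x : ℕ) : ℕ :=
  ((Finset.range d).filter (fun k => Ps r k < x)).card

private lemma Wd_succ (r : ℕ → ℕ) (d : ℕ) :
    Wd r (d+1) = Wd r d ++ (true :: List.replicate (r (d + 1) - 1) false) := by
  simp [Wd, List.range_succ]

private lemma Ps_succ (r : ℕ → ℕ) (k : ℕ) : Ps r (k+1) = Ps r k + r (k+1) := by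
  simp [Ps, Finset.sum_Icc_succ_top (Nat.one_le_iff_ne_zero.mpr (Nat.succ_ne_zero k))]

private lemma Wd_length (r : ℕ → ℕ) (d : ℕ) (hr : ∀ i, 1 ≤ i → i ≤ d → 1 ≤ r i) :
    (Wd r d).length = Ps r d := by
  induction d with
  | zero => simp [Wd, Ps]
  | succ n ih =>
    rw [Wd_succ, List.length_append, ih (fun i h1 h2 => hr i h1 (by omega)), Ps_succ]
    have := hr (n+1) (by omega) le_rfl
    simp; omega

private lemma count_take (r : ℕ → ℕ) (d : ℕ) (hr : ∀ i, 1 ≤ i → i ≤ d → 1 ≤ r i) (x : ℕ) :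
    ((Wd r d).take x).count true = fc r d x := by
  induction d with
  | zero => simp [Wd, fc]
  | succ n ih =>
    rw [Wd_succ, List.take_append, List.count_append,
      ih (fun i h1 h2 => hr i h1 (by omega)),
      Wd_length r n (fun i h1 h2 => hr i h1 (by omega))]
    have hcount : ((true :: List.replicate (r (n + 1) - 1) false).take (x - Ps r n)).count true
        = if Ps r n < x then 1 else 0 := by
      rcases Nat.lt_or_ge (Ps r n) x with h | h
      · have : x - Ps r n = (x - Ps r n - 1) + 1 := by omega
        rw [this, if_pos h]
        simp [List.take_succ_cons, List.count_cons, List.count_replicate]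
      · rw [Nat.sub_eq_zero_of_le h, if_neg (by omega)]; simp
    rw [hcount, fc, fc, Finset.range_add_one, Finset.filter_insert]
    by_cases h : Ps r n < x
    · rw [if_pos h, if_pos h, Finset.card_insert_of_notMem (by simp)]
    · rw [if_neg h, if_neg h]; ring

private lemma Ps_mono (r : ℕ → ℕ) : Monotone (Ps r) := fun j k h =>
  Finset.sum_le_sum_of_subset (Finset.Icc_subset_Icc_right h)

private lemma Ps_strict (r : ℕ → ℕ) (d : ℕ) (hr : ∀ i, 1 ≤ i → i ≤ d → 1 ≤ r i)
    {j k : ℕ} (hjk : j < k) (hk : k ≤ d) : Ps r j < Ps r k := by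
  have h1 : Ps r (j+1) = Ps r j + r (j+1) := Ps_succ r j
  have h2 : 1 ≤ r (j+1) := hr (j+1) (by omega) (by omega)
  have h3 : Ps r (j+1) ≤ Ps r k := Ps_mono r (by omega)
  omega

private lemma fc_le (r : ℕ → ℕ) (d x : ℕ) : fc r d x ≤ d := by
  simpa [fc] using (Finset.card_filter_le (Finset.range d) _)

private lemma fc_ge (r : ℕ → ℕ) (d : ℕ) {k x : ℕ} (hk : k < d) (h : Ps r k < x) :
    k + 1 ≤ fc r d x := by
  have : Finset.range (k+1) ⊆ (Finset.range d).filter (fun j => Ps r j < x) := by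
    intro j hj
    simp only [Finset.mem_range] at hj
    simp only [Finset.mem_filter, Finset.mem_range]
    exact ⟨by omega, lt_of_le_of_lt (Ps_mono r (by omega)) h⟩
  simpa [fc] using Finset.card_le_card this

private lemma fc_le_of (r : ℕ → ℕ) (d : ℕ) {k x : ℕ} (h : x ≤ Ps r k) :
    fc r d x ≤ k := by
  have : (Finset.range d).filter (fun j => Ps r j < x) ⊆ Finset.range k := by
    intro j hj
    simp only [Finset.mem_filter, Finset.mem_range] at hj ⊢
    by_contra hc
    exact absurd (lt_of_lt_of_le hj.2 (h.trans (Ps_mono r (by omega)))) (lt_irrefl _)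
  simpa [fc] using Finset.card_le_card this

private lemma fc_Ps (r : ℕ → ℕ) (d : ℕ) (hr : ∀ i, 1 ≤ i → i ≤ d → 1 ≤ r i)
    {k : ℕ} (hk : k ≤ d) : fc r d (Ps r k) = k := by
  refine le_antisymm (fc_le_of r d le_rfl) ?_
  rcases Nat.eq_zero_or_pos k with h | h
  · omega
  · have := fc_ge r d (k := k-1) (x := Ps r k) (by omega)
      (Ps_strict r d hr (by omega) hk)
    omega

private lemma fc_Ps_succ (r : ℕ → ℕ) (d : ℕ) (hr : ∀ i, 1 ≤ i → i ≤ d → 1 ≤ r i)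
    {k : ℕ} (hk : k < d) : fc r d (Ps r k + 1) = k + 1 := by
  refine le_antisymm (fc_le_of r d ?_) (fc_ge r d hk (by omega))
  have := Ps_strict r d hr (j := k) (k := k+1) (by omega) (by omega)
  omega

private lemma subadd_iff (r : ℕ → ℕ) (d : ℕ) (hr : ∀ i, 1 ≤ i → i ≤ d → 1 ≤ r i) :
    IsPrefixNormal (Wd r d) ↔
      ∀ a l : ℕ, a + l ≤ Ps r d → fc r d (a + l) ≤ fc r d a + fc r d l := by
  constructor
  · intro hpn a l hal
    set u : List Bool := ((Wd r d).drop a).take l with hu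
    have hinf : u <:+: Wd r d := ⟨(Wd r d).take a, ((Wd r d).drop a).drop l, by
      rw [List.append_assoc, hu, List.take_append_drop, List.take_append_drop]⟩
    have hlen : u.length = l := by
      simp [hu, Wd_length r d hr]; omega
    have hsplit : (Wd r d).take (a + l) = (Wd r d).take a ++ u := List.take_add ..
    have := hpn u hinf
    rw [hlen] at this
    calc fc r d (a + l) = ((Wd r d).take (a+l)).count true := (count_take r d hr _).symm
      _ = ((Wd r d).take a).count true + u.count true := by rw [hsplit]; exact List.count_append ..
      _ ≤ ((Wd r d).take a).count true + ((Wd r d).take l).count true := by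
          exact Nat.add_le_add_left this _
      _ = fc r d a + fc r d l := by rw [count_take r d hr, count_take r d hr]
  · intro hsub u hinf
    obtain ⟨s, t, hw⟩ := hinf
    set a := s.length
    set l := u.length
    have hal : a + l ≤ Ps r d := by
      rw [← Wd_length r d hr, ← hw]; simp [a, l]
    have h1 : (Wd r d).take (a + l) = s ++ u := by
      rw [← hw]
      have : a + l = (s ++ u).length := by simp [a, l]
      rw [this]; exact List.take_left ..
    have h2 : (Wd r d).take a = s := by
      rw [← hw, List.append_assoc]; exact List.take_left ..
    have key := hsub a l hal
    rw [← count_take r d hr, ← count_take r d hr, ← count_take r d hr, h1, h2,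
      List.count_append] at key
    omega

private lemma Ps_add (r : ℕ → ℕ) {a b : ℕ} (h : a ≤ b) :
    Ps r a + ∑ i ∈ Finset.Icc (a+1) b, r i = Ps r b := by
  have e1 : Finset.Icc 1 a = Finset.Ioc 0 a := by rw [← Finset.Icc_add_one_left_eq_Ioc, zero_add]
  have e2 : Finset.Icc 1 b = Finset.Ioc 0 b := by rw [← Finset.Icc_add_one_left_eq_Ioc, zero_add]
  have e3 : Finset.Icc (a+1) b = Finset.Ioc a b := by rw [← Finset.Icc_add_one_left_eq_Ioc]
  simp only [Ps]
  rw [e1, e2, e3]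
  exact Finset.sum_Ioc_consecutive r (Nat.zero_le a) h

theorem prefixNormal_iff_run_inequalities (d : ℕ) (hd : 0 < d) (r : ℕ → ℕ)
    (hr : ∀ i, 1 ≤ i → i ≤ d → 1 ≤ r i) :
    IsPrefixNormal (((List.range d).map
        (fun i => true :: List.replicate (r (i + 1) - 1) false)).flatten) ↔
      ∀ m j : ℕ, 1 ≤ m → m ≤ d - 2 → 2 ≤ j → j ≤ d - m →
        ∑ i ∈ Finset.Icc 1 m, r i ≤ ∑ i ∈ Finset.Icc j (j + m - 1), r i := by
  rw [show (((List.range d).map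
      (fun i => true :: List.replicate (r (i + 1) - 1) false)).flatten) = Wd r d from rfl,
    subadd_iff r d hr]
  constructor
  · intro hsub m j hm1 hm2 hj2 hjm
    have hjm1 : j + m - 1 < d := by omega
    have hle : Ps r (j-1) ≤ Ps r (j+m-1) := Ps_mono r (by omega)
    have hlt : Ps r (j+m-1) < Ps r d := Ps_strict r d hr hjm1 le_rfl
    have hsum : Ps r (j-1) + ∑ i ∈ Finset.Icc j (j+m-1), r i = Ps r (j+m-1) := by
      have := Ps_add r (show j - 1 ≤ j + m - 1 by omega)
      rwa [show j-1+1 = j by omega] at this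
    set l := ∑ i ∈ Finset.Icc j (j+m-1), r i + 1 with hl
    have key := hsub (Ps r (j-1)) l (by omega)
    rw [show Ps r (j-1) + l = Ps r (j+m-1) + 1 by omega] at key
    rw [fc_Ps_succ r d hr hjm1, fc_Ps r d hr (show j-1 ≤ d by omega)] at key
    by_contra hcon
    push_neg at hcon
    have hPm : Ps r m = ∑ i ∈ Finset.Icc 1 m, r i := rfl
    have : fc r d l ≤ m := fc_le_of r d (by omega)
    omega
  · intro hineq a l hal
    set c := fc r d (a+l) with hc
    set b := fc r d a with hb
    by_cases hcb : c ≤ b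
    · omega
    push_neg at hcb
    have hcd : c ≤ d := fc_le r d _
    have hbd : b < d := lt_of_lt_of_le hcb hcd
    have hPb : a ≤ Ps r b := by
      by_contra h
      push_neg at h
      have := fc_ge r d hbd h
      omega
    have hc1 : Ps r (c-1) < a + l := by
      by_contra h
      push_neg at h
      have := fc_le_of r d (k := c-1) h
      omega
    have hsum : Ps r b + ∑ i ∈ Finset.Icc (b+1) (c-1), r i = Ps r (c-1) :=
      Ps_add r (by omega)
    have hS : ∑ i ∈ Finset.Icc (b+1) (c-1), r i < l := by omega
    set m := c - 1 - b with hm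
    have hP0 : Ps r 0 = 0 := by simp [Ps]
    have hPm : Ps r m < l := by
      rcases Nat.eq_zero_or_pos m with h0 | h0
      · have hl1 : 1 ≤ l := by
          rcases Nat.eq_zero_or_pos l with h | h
          · have : c = b := by rw [hc, hb, h, Nat.add_zero]
            omega
          · exact h
        rw [h0, hP0]; omega
      · rcases Nat.eq_zero_or_pos b with hb0 | hb0
        · have heq : Ps r m = ∑ i ∈ Finset.Icc (b+1) (c-1), r i := by
            rw [show m = c - 1 from by omega, hb0]
            simp [Ps]
          omega
        · have hx := hineq m (b+1) h0 (by omega) (by omega) (by omega)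
          rw [show b + 1 + m - 1 = c - 1 from by omega] at hx
          have : Ps r m = ∑ i ∈ Finset.Icc 1 m, r i := rfl
          omega
    have := fc_ge r d (show m < d by omega) hPm
    omega
end

section
/- The generating function of the numbers pnw(n,4) satisfies the formal power series identity (1 − x³)·(1 − x)³ · ∑_{n≥1} pnw(n,4)·xⁿ = x⁴ (in the ring of formal power series over the integers). -/
def rep (k : ℕ) : List Bool := List.replicate k false

def wrd (g1 g2 g3 g4 : ℕ) : List Bool :=
  true :: (rep g1 ++ true :: (rep g2 ++ true :: (rep g3 ++ true :: rep g4)))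

lemma cnt1 (g i : ℕ) : ((true :: rep g).take i).count true = min i 1 := by
  cases i with
  | zero => simp
  | succ i =>
    simp [rep, List.take_replicate, List.count_replicate]

lemma wrd_len (g1 g2 g3 g4 : ℕ) : (wrd g1 g2 g3 g4).length = g1+g2+g3+g4+4 := by
  simp [wrd, rep]; ring

lemma wrd_count (g1 g2 g3 g4 : ℕ) : (wrd g1 g2 g3 g4).count true = 4 := by
  simp [wrd, rep, List.count_replicate]

lemma cnt_formula (g1 g2 g3 g4 i : ℕ) :
    ((wrd g1 g2 g3 g4).take i).count true =
      min i 1 + (min (i - (g1+1)) 1 + (min (i - (g1+1) - (g2+1)) 1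
        + min (i - (g1+1) - (g2+1) - (g3+1)) 1)) := by
  have e : wrd g1 g2 g3 g4 =
      (true :: rep g1) ++ ((true :: rep g2) ++ ((true :: rep g3) ++ (true :: rep g4))) := by
    simp [wrd]
  rw [e, List.take_append, List.count_append,
    List.take_append, List.count_append,
    List.take_append, List.count_append,
    cnt1, cnt1, cnt1, cnt1]
  simp [rep]

lemma infix_count {w u : List Bool} (h : u <:+: w) :
    ∃ j, (w.take (j + u.length)).count true = (w.take j).count true + u.count true := by
  obtain ⟨s, t, rfl⟩ := h
  refine ⟨s.length, ?_⟩
  have h2 : (s ++ u ++ t).take (s.length + u.length) = s ++ u := by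
    rw [show s ++ u ++ t = (s ++ u) ++ t from rfl, List.take_append]
    simp
  have h1 : (s ++ u ++ t).take s.length = s := by
    rw [show s ++ u ++ t = (s ++ u) ++ t from rfl, List.take_append]
    simp
  rw [h1, h2, List.count_append]

lemma take_drop_count (w : List Bool) (j i : ℕ) :
    (w.take (j + i)).count true
      = (w.take j).count true + ((w.drop j).take i).count true := by
  rw [List.take_add, List.count_append]

set_option maxHeartbeats 1600000 in
lemma pn_of {g1 g2 g3 g4 : ℕ} (h2 : g1 ≤ g2) (h3 : g1 ≤ g3) :
    IsPrefixNormal (wrd g1 g2 g3 g4) := by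
  intro u hu
  obtain ⟨j, hj⟩ := infix_count hu
  rw [cnt_formula, cnt_formula] at hj
  rw [cnt_formula]
  omega

lemma cnt_mono (g1 g2 g3 g4 a b : ℕ) (hab : a ≤ b) :
    ((wrd g1 g2 g3 g4).take a).count true ≤ ((wrd g1 g2 g3 g4).take b).count true := by
  rw [cnt_formula, cnt_formula]; omega

lemma pn_constraints {g1 g2 g3 g4 : ℕ} (h : IsPrefixNormal (wrd g1 g2 g3 g4)) :
    g1 ≤ g2 ∧ g1 ≤ g3 := by
  have key : ∀ j i, (((wrd g1 g2 g3 g4).drop j).take i).count true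
      ≤ ((wrd g1 g2 g3 g4).take i).count true := by
    intro j i
    have hi : ((wrd g1 g2 g3 g4).drop j).take i <:+: wrd g1 g2 g3 g4 :=
      ((List.take_prefix i _).isInfix).trans (List.drop_suffix j _).isInfix
    have h1 := h _ hi
    have hlen : (((wrd g1 g2 g3 g4).drop j).take i).length ≤ i := by
      simp [List.length_take]
    exact h1.trans (cnt_mono _ _ _ _ _ _ hlen)
  constructor
  · have k1 := key (g1+1) (g2+2)
    have e := take_drop_count (wrd g1 g2 g3 g4) (g1+1) (g2+2)
    rw [cnt_formula] at k1
    rw [cnt_formula, cnt_formula] at e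
    omega
  · have k1 := key (g1+g2+2) (g3+2)
    have e := take_drop_count (wrd g1 g2 g3 g4) (g1+g2+2) (g3+2)
    rw [cnt_formula] at k1
    rw [cnt_formula, cnt_formula] at e
    omega

lemma exists_peel : ∀ (w : List Bool), 0 < w.count true →
    ∃ z w', w = rep z ++ true :: w' ∧ w.count true = w'.count true + 1
  | [], h => by simp at h
  | (true :: t), h => ⟨0, t, by simp [rep], by simp⟩
  | (false :: t), h => by
    have ht : 0 < t.count true := by simpa using h
    obtain ⟨z, w', hw, hc⟩ := exists_peel t ht
    exact ⟨z + 1, w', by simp [rep, List.replicate_succ, hw, ← hw],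
      by simpa using hc⟩

lemma all_false (w : List Bool) (h : w.count true = 0) : w = rep w.length := by
  have : ∀ b ∈ w, b = false := by
    intro b hb
    cases b
    · rfl
    · exact absurd (List.count_pos_iff.mpr hb) (by omega)
  exact List.eq_replicate_length.mpr this

lemma pn_decomp {w : List Bool} (hc : w.count true = 4) (hpn : IsPrefixNormal w) :
    ∃ g1 g2 g3 g4, g1 ≤ g2 ∧ g1 ≤ g3 ∧ w = wrd g1 g2 g3 g4 := by
  obtain ⟨z0, w1, e0, c0⟩ := exists_peel w (by omega)
  obtain ⟨g1, w2, e1, c1⟩ := exists_peel w1 (by omega)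
  obtain ⟨g2, w3, e2, c2⟩ := exists_peel w2 (by omega)
  obtain ⟨g3, w4, e3, c3⟩ := exists_peel w3 (by omega)
  have c4 : w4.count true = 0 := by omega
  have e4 := all_false w4 c4
  -- z0 = 0
  have hz0 : z0 = 0 := by
    by_contra hz
    have hinf : [true] <:+: w := ⟨rep z0, w1, by rw [e0]; simp⟩
    have := hpn [true] hinf
    obtain ⟨z, hznz⟩ : ∃ z, z0 = z + 1 := ⟨z0 - 1, by omega⟩
    rw [e0, hznz] at this
    simp [rep, List.replicate_succ] at this
  subst hz0
  have hw : w = wrd g1 g2 g3 w4.length := by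
    rw [e0, e1, e2, e3, e4]; simp [rep, wrd]
  obtain ⟨h2, h3⟩ := pn_constraints (hw ▸ hpn)
  exact ⟨g1, g2, g3, w4.length, h2, h3, hw⟩

lemma seg_inj : ∀ (a b : ℕ) (x y : List Bool),
    rep a ++ true :: x = rep b ++ true :: y → a = b ∧ x = y
  | 0, 0, x, y, h => by simpa [rep] using h
  | 0, b+1, x, y, h => by simp [rep, List.replicate_succ] at h
  | a+1, 0, x, y, h => by simp [rep, List.replicate_succ] at h
  | a+1, b+1, x, y, h => by
    simp only [rep, List.replicate_succ, List.cons_append, List.cons.injEq] at h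
    obtain ⟨hab, hxy⟩ := seg_inj a b x y h.2
    exact ⟨by omega, hxy⟩

lemma wrd_inj {g1 g2 g3 g4 h1 h2 h3 h4 : ℕ}
    (h : wrd g1 g2 g3 g4 = wrd h1 h2 h3 h4) :
    g1 = h1 ∧ g2 = h2 ∧ g3 = h3 ∧ g4 = h4 := by
  simp only [wrd, List.cons.injEq, true_and] at h
  obtain ⟨e1, h⟩ := seg_inj _ _ _ _ h
  obtain ⟨e2, h⟩ := seg_inj _ _ _ _ h
  obtain ⟨e3, h⟩ := seg_inj _ _ _ _ h
  have : g4 = h4 := by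
    have := congrArg List.length h
    simpa [rep] using this
  exact ⟨e1, e2, e3, this⟩

/-- The number of prefix normal words of length `n` and density `d` (number of 1s). -/
noncomputable def pnwd (n d : ℕ) : ℕ :=
  Nat.card {w : List Bool // w.length = n ∧ w.count true = d ∧ IsPrefixNormal w}

def T (n : ℕ) := {q : ℕ×ℕ×ℕ×ℕ // q.1 ≤ q.2.1 ∧ q.1 ≤ q.2.2.1 ∧ q.1 + q.2.1 + q.2.2.1 + q.2.2.2 + 4 = n}
def S4 (m : ℕ) := {q : ℕ×ℕ×ℕ×ℕ // 3*q.1 + q.2.1 + q.2.2.1 + q.2.2.2 = m}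
def S3 (m : ℕ) := {q : ℕ×ℕ×ℕ // 3*q.1 + q.2.1 + q.2.2 = m}
def S2 (m : ℕ) := {q : ℕ×ℕ // 3*q.1 + q.2 = m}
def S1 (m : ℕ) := {g : ℕ // 3*g = m}

instance S4fin (m : ℕ) : Finite (S4 m) := by
  apply Finite.of_injective (fun q : S4 m =>
    ((⟨q.1.1, by have := q.2; omega⟩ : Fin (m+1)), (⟨q.1.2.1, by have := q.2; omega⟩ : Fin (m+1)),
     (⟨q.1.2.2.1, by have := q.2; omega⟩ : Fin (m+1)), (⟨q.1.2.2.2, by have := q.2; omega⟩ : Fin (m+1))))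
  rintro ⟨⟨a,b,c,d⟩,h⟩ ⟨⟨a',b',c',d'⟩,h'⟩ he
  simp only [Prod.mk.injEq, Fin.mk.injEq] at he
  exact Subtype.ext (by simp only [Prod.mk.injEq]; omega)

instance S3fin (m : ℕ) : Finite (S3 m) := by
  apply Finite.of_injective (fun q : S3 m =>
    ((⟨q.1.1, by have := q.2; omega⟩ : Fin (m+1)), (⟨q.1.2.1, by have := q.2; omega⟩ : Fin (m+1)),
     (⟨q.1.2.2, by have := q.2; omega⟩ : Fin (m+1))))
  rintro ⟨⟨a,b,c⟩,h⟩ ⟨⟨a',b',c'⟩,h'⟩ he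
  simp only [Prod.mk.injEq, Fin.mk.injEq] at he
  exact Subtype.ext (by simp only [Prod.mk.injEq]; omega)

instance S2fin (m : ℕ) : Finite (S2 m) := by
  apply Finite.of_injective (fun q : S2 m =>
    ((⟨q.1.1, by have := q.2; omega⟩ : Fin (m+1)), (⟨q.1.2, by have := q.2; omega⟩ : Fin (m+1))))
  rintro ⟨⟨a,b⟩,h⟩ ⟨⟨a',b'⟩,h'⟩ he
  simp only [Prod.mk.injEq, Fin.mk.injEq] at he
  exact Subtype.ext (by simp only [Prod.mk.injEq]; omega)

instance S1fin (m : ℕ) : Finite (S1 m) := by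
  apply Finite.of_injective (fun q : S1 m => (⟨q.1, by have := q.2; omega⟩ : Fin (m+1)))
  rintro ⟨a,h⟩ ⟨a',h'⟩ he
  simp only [Fin.mk.injEq] at he
  exact Subtype.ext he

lemma card_words_eq_T (n : ℕ) : pnwd n 4 = Nat.card (T n) := by
  refine (Nat.card_eq_of_bijective
    (fun q : T n => (⟨wrd q.1.1 q.1.2.1 q.1.2.2.1 q.1.2.2.2,
      by rw [wrd_len]; have := q.2.2.2; omega,
      wrd_count _ _ _ _, pn_of q.2.1 q.2.2.1⟩ :
      {w : List Bool // w.length = n ∧ w.count true = 4 ∧ IsPrefixNormal w})) ⟨?_, ?_⟩).symm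
  · rintro ⟨⟨a,b,c,d⟩,h⟩ ⟨⟨a',b',c',d'⟩,h'⟩ he
    simp only [Subtype.mk.injEq] at he
    obtain ⟨e1,e2,e3,e4⟩ := wrd_inj he
    exact Subtype.ext (by simp only [Prod.mk.injEq]; omega)
  · rintro ⟨w, hl, hc, hpn⟩
    obtain ⟨g1, g2, g3, g4, h2, h3, hw⟩ := pn_decomp hc hpn
    have hlen : g1+g2+g3+g4+4 = n := by rw [hw, wrd_len] at hl; omega
    exact ⟨⟨(g1,g2,g3,g4), by dsimp only; omega⟩, by simp [hw]⟩

lemma card_T_eq_S4 (n : ℕ) (hn : 4 ≤ n) : Nat.card (T n) = Nat.card (S4 (n-4)) := by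
  apply Nat.card_eq_of_bijective
    (fun q : T n => (⟨(q.1.1, q.1.2.1 - q.1.1, q.1.2.2.1 - q.1.1, q.1.2.2.2),
      by have := q.2; dsimp only; omega⟩ : S4 (n-4)))
  constructor
  · rintro ⟨⟨a,b,c,d⟩,h⟩ ⟨⟨a',b',c',d'⟩,h'⟩ he
    simp only [Subtype.mk.injEq, Prod.mk.injEq] at he
    have hh := h; have hh' := h'
    dsimp only at hh hh'
    exact Subtype.ext (by simp only [Prod.mk.injEq]; omega)
  · rintro ⟨⟨g,a,b,c⟩, h⟩
    dsimp only at h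
    refine ⟨⟨(g, g+a, g+b, c), ?_, ?_, ?_⟩, ?_⟩
    · dsimp only; omega
    · dsimp only; omega
    · dsimp only; omega
    · apply Subtype.ext; dsimp only; simp only [Prod.mk.injEq, true_and, and_true]; omega

lemma card_S4_zero : Nat.card (S4 0) = 1 := by
  have hne : Nonempty (S4 0) := ⟨⟨(0,0,0,0), rfl⟩⟩
  have hss : Subsingleton (S4 0) := ⟨by
    rintro ⟨⟨a,b,c,d⟩,h⟩ ⟨⟨a',b',c',d'⟩,h'⟩
    dsimp only at h h'
    exact Subtype.ext (by simp only [Prod.mk.injEq]; omega)⟩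
  exact Nat.card_unique

lemma card_S3_zero : Nat.card (S3 0) = 1 := by
  have hne : Nonempty (S3 0) := ⟨⟨(0,0,0), rfl⟩⟩
  have hss : Subsingleton (S3 0) := ⟨by
    rintro ⟨⟨a,b,c⟩,h⟩ ⟨⟨a',b',c'⟩,h'⟩
    dsimp only at h h'
    exact Subtype.ext (by simp only [Prod.mk.injEq]; omega)⟩
  exact Nat.card_unique

lemma card_S2_zero : Nat.card (S2 0) = 1 := by
  have hne : Nonempty (S2 0) := ⟨⟨(0,0), rfl⟩⟩
  have hss : Subsingleton (S2 0) := ⟨by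
    rintro ⟨⟨a,b⟩,h⟩ ⟨⟨a',b'⟩,h'⟩
    dsimp only at h h'
    exact Subtype.ext (by simp only [Prod.mk.injEq]; omega)⟩
  exact Nat.card_unique

lemma card_S1 (m : ℕ) : Nat.card (S1 m) = if 3 ∣ m then 1 else 0 := by
  by_cases h : 3 ∣ m
  · rw [if_pos h]
    obtain ⟨k, rfl⟩ := h
    have hne : Nonempty (S1 (3*k)) := ⟨⟨k, rfl⟩⟩
    have hss : Subsingleton (S1 (3*k)) := ⟨by
      rintro ⟨g,hg⟩ ⟨g',hg'⟩
      exact Subtype.ext (show g = g' by omega)⟩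
    exact Nat.card_unique
  · rw [if_neg h]
    have : IsEmpty (S1 m) := ⟨by rintro ⟨g, hg⟩; exact h ⟨g, hg.symm⟩⟩
    exact Nat.card_of_isEmpty

def e4 (m : ℕ) : S3 (m+1) ⊕ S4 m ≃ S4 (m+1) where
  toFun := fun x => match x with
    | .inl ⟨(a,b,c), h⟩ => ⟨(a,b,c,0), by dsimp only at h ⊢; omega⟩
    | .inr ⟨(a,b,c,d), h⟩ => ⟨(a,b,c,d+1), by dsimp only at h ⊢; omega⟩
  invFun := fun q => match q with
    | ⟨(a,b,c,0), h⟩ => .inl ⟨(a,b,c), by dsimp only at h ⊢; omega⟩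
    | ⟨(a,b,c,d+1), h⟩ => .inr ⟨(a,b,c,d), by dsimp only at h ⊢; omega⟩
  left_inv := by rintro (⟨⟨a,b,c⟩,h⟩|⟨⟨a,b,c,d⟩,h⟩) <;> rfl
  right_inv := by rintro ⟨⟨a,b,c,d⟩,h⟩; cases d <;> rfl

def e3 (m : ℕ) : S2 (m+1) ⊕ S3 m ≃ S3 (m+1) where
  toFun := fun x => match x with
    | .inl ⟨(a,b), h⟩ => ⟨(a,b,0), by dsimp only at h ⊢; omega⟩
    | .inr ⟨(a,b,c), h⟩ => ⟨(a,b,c+1), by dsimp only at h ⊢; omega⟩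
  invFun := fun q => match q with
    | ⟨(a,b,0), h⟩ => .inl ⟨(a,b), by dsimp only at h ⊢; omega⟩
    | ⟨(a,b,c+1), h⟩ => .inr ⟨(a,b,c), by dsimp only at h ⊢; omega⟩
  left_inv := by rintro (⟨⟨a,b⟩,h⟩|⟨⟨a,b,c⟩,h⟩) <;> rfl
  right_inv := by rintro ⟨⟨a,b,c⟩,h⟩; cases c <;> rfl

def e2 (m : ℕ) : S1 (m+1) ⊕ S2 m ≃ S2 (m+1) where
  toFun := fun x => match x with
    | .inl ⟨a, h⟩ => ⟨(a,0), by dsimp only at h ⊢; omega⟩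
    | .inr ⟨(a,b), h⟩ => ⟨(a,b+1), by dsimp only at h ⊢; omega⟩
  invFun := fun q => match q with
    | ⟨(a,0), h⟩ => .inl ⟨a, by dsimp only at h ⊢; omega⟩
    | ⟨(a,b+1), h⟩ => .inr ⟨(a,b), by dsimp only at h ⊢; omega⟩
  left_inv := by rintro (⟨a,h⟩|⟨⟨a,b⟩,h⟩) <;> rfl
  right_inv := by rintro ⟨⟨a,b⟩,h⟩; cases b <;> rfl

lemma card_S4_succ (m : ℕ) :
    Nat.card (S4 (m+1)) = Nat.card (S3 (m+1)) + Nat.card (S4 m) :=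
  (Nat.card_congr (e4 m).symm).trans Nat.card_sum

lemma card_S3_succ (m : ℕ) :
    Nat.card (S3 (m+1)) = Nat.card (S2 (m+1)) + Nat.card (S3 m) :=
  (Nat.card_congr (e3 m).symm).trans Nat.card_sum

lemma card_S2_succ (m : ℕ) :
    Nat.card (S2 (m+1)) = Nat.card (S1 (m+1)) + Nat.card (S2 m) :=
  (Nat.card_congr (e2 m).symm).trans Nat.card_sum

open PowerSeries

noncomputable def h4' (m : ℕ) : ℤ := (Nat.card (S4 m) : ℤ)
noncomputable def h3' (m : ℕ) : ℤ := (Nat.card (S3 m) : ℤ)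
noncomputable def h2' (m : ℕ) : ℤ := (Nat.card (S2 m) : ℤ)
noncomputable def h1' (m : ℕ) : ℤ := (Nat.card (S1 m) : ℤ)

lemma X_mul_mk (g : ℕ → ℤ) :
    (X : PowerSeries ℤ) * mk g = mk (fun n => if n = 0 then 0 else g (n-1)) := by
  ext n
  cases n with
  | zero => simp [PowerSeries.coeff_zero_eq_constantCoeff, map_mul]
  | succ n => rw [PowerSeries.coeff_succ_X_mul]; simp

lemma one_sub_X_mul (g : ℕ → ℤ) :
    (1 - (X : PowerSeries ℤ)) * mk g
      = mk (fun n => g n - if n = 0 then 0 else g (n-1)) := by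
  rw [sub_mul, one_mul, X_mul_mk]
  ext n
  simp [PowerSeries.coeff_mk]

lemma c1 : (1 - (X : PowerSeries ℤ)) * mk h4' = mk h3' := by
  rw [one_sub_X_mul]
  ext n
  simp only [PowerSeries.coeff_mk]
  cases n with
  | zero => simp [h4', h3', card_S4_zero, card_S3_zero]
  | succ n =>
    have := card_S4_succ n
    simp only [h4', h3', if_neg (Nat.succ_ne_zero n), Nat.add_sub_cancel]
    push_cast [this]; ring

lemma c2 : (1 - (X : PowerSeries ℤ)) * mk h3' = mk h2' := by
  rw [one_sub_X_mul]
  ext n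
  simp only [PowerSeries.coeff_mk]
  cases n with
  | zero => simp [h3', h2', card_S3_zero, card_S2_zero]
  | succ n =>
    have := card_S3_succ n
    simp only [h3', h2', if_neg (Nat.succ_ne_zero n), Nat.add_sub_cancel]
    push_cast [this]; ring

lemma c3 : (1 - (X : PowerSeries ℤ)) * mk h2' = mk h1' := by
  rw [one_sub_X_mul]
  ext n
  simp only [PowerSeries.coeff_mk]
  cases n with
  | zero => simp [h2', h1', card_S2_zero, card_S1]
  | succ n =>
    have := card_S2_succ n
    simp only [h2', h1', if_neg (Nat.succ_ne_zero n), Nat.add_sub_cancel]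
    push_cast [this]; ring

lemma c4 : (1 - (X : PowerSeries ℤ)^3) * mk h1' = 1 := by
  have e3 : (X : PowerSeries ℤ)^3 * mk h1' = X*(X*(X*mk h1')) := by ring
  rw [sub_mul, one_mul, e3, X_mul_mk, X_mul_mk, X_mul_mk]
  ext n
  rw [map_sub, PowerSeries.coeff_one]
  simp only [PowerSeries.coeff_mk]
  rcases n with _|_|_|n
  · simp [h1', card_S1]
  · simp [h1', card_S1]
  · simp [h1', card_S1]
  · have hd : (3 ∣ n + 3) ↔ (3 ∣ n) := by omega
    simp only [if_neg (by omega : ¬ (n+3) = 0)]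
    simp only [show n+3-1 = n+2 by omega, if_neg (by omega : ¬ (n+2) = 0),
      show n+2-1 = n+1 by omega, if_neg (by omega : ¬ (n+1) = 0), Nat.add_sub_cancel]
    simp only [h1', card_S1, hd]
    split_ifs <;> simp

lemma pnwd_small (n : ℕ) (h : n < 4) : pnwd n 4 = 0 := by
  have : IsEmpty {w : List Bool // w.length = n ∧ w.count true = 4 ∧ IsPrefixNormal w} := by
    refine ⟨?_⟩
    rintro ⟨w, hl, hc, -⟩
    have := List.count_le_length (a := true) (l := w)
    omega
  exact Nat.card_of_isEmpty

lemma X4_mul_mk (g : ℕ → ℤ) :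
    (X : PowerSeries ℤ)^4 * mk g = mk (fun n => if n < 4 then 0 else g (n-4)) := by
  have e : (X : PowerSeries ℤ)^4 * mk g = X*(X*(X*(X*mk g))) := by ring
  rw [e, X_mul_mk, X_mul_mk, X_mul_mk, X_mul_mk]
  ext n
  simp only [PowerSeries.coeff_mk]
  rcases n with _|_|_|_|n
  · simp
  · simp
  · simp
  · simp
  · simp only [if_neg (by omega : ¬ (n+4) = 0), show n+4-1 = n+3 by omega,
      if_neg (by omega : ¬ (n+3) = 0), show n+3-1 = n+2 by omega,
      if_neg (by omega : ¬ (n+2) = 0), show n+2-1 = n+1 by omega,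
      if_neg (by omega : ¬ (n+1) = 0), Nat.add_sub_cancel,
      if_neg (by omega : ¬ (n+4) < 4)]
    congr 1

lemma hG : PowerSeries.mk (fun n => if n = 0 then 0 else (pnwd n 4 : ℤ))
    = (X : PowerSeries ℤ)^4 * mk h4' := by
  rw [X4_mul_mk]
  ext n
  simp only [PowerSeries.coeff_mk]
  by_cases h0 : n = 0
  · simp [h0]
  by_cases h4 : n < 4
  · rw [if_neg h0, if_pos h4, pnwd_small n h4]; norm_num
  · rw [if_neg h0, if_neg h4, h4']
    have := (card_words_eq_T n).trans (card_T_eq_S4 n (by omega))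
    rw [this]

open PowerSeries in
theorem genFun_density_four :
    (1 - (X : PowerSeries ℤ) ^ 3) * (1 - X) ^ 3 *
      PowerSeries.mk (fun n => if n = 0 then 0 else (pnwd n 4 : ℤ)) = X ^ 4 := by
  rw [hG]
  have e : (1 - (X : PowerSeries ℤ)^3) * (1 - X)^3 * (X^4 * mk h4')
      = X^4 * ((1 - X^3) * ((1-X) * ((1-X) * ((1-X) * mk h4')))) := by ring
  rw [e, c1, c2, c3, c4, mul_one]
end

section
/- The generating function of the numbers pnw(n,5) satisfies the formal power series identity (1 − x⁴)·(1 − x²)²·(1 − x)² · ∑_{n≥1} pnw(n,5)·xⁿ = x⁵·(1 + x + x²) (in the ring of formal power series over the integers). -/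
/-- the word 1 0^g₁ 1 0^g₂ ... -/
def wordOf : List ℕ → List Bool
  | [] => []
  | g :: gs => true :: (List.replicate g false ++ wordOf gs)

lemma length_wordOf : ∀ gs, (wordOf gs).length = gs.length + gs.sum
  | [] => rfl
  | g :: gs => by simp [wordOf, length_wordOf gs]; omega

lemma count_wordOf : ∀ gs, (wordOf gs).count true = gs.length
  | [] => rfl
  | g :: gs => by simp [wordOf, List.count_cons, List.count_append, count_wordOf gs, List.count_replicate]

/-- number of trues in `take L (wordOf gs)` -/
def cnt : List ℕ → ℕ → ℕ
  | [], _ => 0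
  | g :: gs, L => if L = 0 then 0 else 1 + cnt gs (L - 1 - g)

lemma count_take_rep (k : ℕ) (v : List Bool) (L : ℕ) :
    ((List.replicate k false ++ v).take L).count true = (v.take (L - k)).count true := by
  rw [List.take_append]
  simp [List.take_replicate, List.count_append, List.count_replicate]

lemma cnt_take : ∀ (gs : List ℕ) (L : ℕ), ((wordOf gs).take L).count true = cnt gs L
  | [], L => by simp [wordOf, cnt]
  | g :: gs, 0 => by simp [cnt]
  | g :: gs, (L+1) => by
      rw [wordOf, cnt]
      simp only [List.take_succ_cons, List.count_cons, count_take_rep, if_neg (Nat.succ_ne_zero L)]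
      rw [cnt_take gs]
      have h : L + 1 - 1 - g = L - g := by omega
      rw [h]
      simp [Nat.add_comm]

/-- number of trues in `take L (drop s (wordOf gs))` -/
def csd : List ℕ → ℕ → ℕ → ℕ
  | [], _, _ => 0
  | g :: gs, s, L => if s = 0 then cnt (g :: gs) L else csd gs (s - 1 - g) (L - (g + 1 - s))

lemma csd_drop : ∀ (gs : List ℕ) (s L : ℕ),
    (((wordOf gs).drop s).take L).count true = csd gs s L
  | [], s, L => by simp [wordOf, csd]
  | g :: gs, 0, L => by rw [csd, if_pos rfl, List.drop_zero, cnt_take]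
  | g :: gs, (s+1), L => by
      rw [csd, if_neg (Nat.succ_ne_zero s), wordOf]
      simp only [List.drop_succ_cons]
      rw [List.drop_append, List.drop_replicate, count_take_rep,
        List.length_replicate]
      rw [csd_drop gs]
      congr 2 <;> omega

set_option maxHeartbeats 3000000 in
lemma key_ineq {a b c d e : ℕ} (h1 : a ≤ b) (h2 : a ≤ c) (h3 : a ≤ d)
    (h4 : a + b ≤ c + d) (s L : ℕ) :
    csd [a,b,c,d,e] s L ≤ cnt [a,b,c,d,e] L := by
  by_cases hs0 : s = 0
  · rw [csd, if_pos hs0]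
  rw [csd, if_neg hs0]
  set s1 := s - 1 - a with hs1d
  set L1 := L - (a + 1 - s) with hL1d
  by_cases hs1 : s1 = 0
  · rw [csd, if_pos hs1]
    simp only [cnt]
    split_ifs <;> omega
  rw [csd, if_neg hs1]
  set s2 := s1 - 1 - b with hs2d
  set L2 := L1 - (b + 1 - s1) with hL2d
  by_cases hs2 : s2 = 0
  · rw [csd, if_pos hs2]
    simp only [cnt]
    split_ifs <;> omega
  rw [csd, if_neg hs2]
  set s3 := s2 - 1 - c with hs3d
  set L3 := L2 - (c + 1 - s2) with hL3d
  by_cases hs3 : s3 = 0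
  · rw [csd, if_pos hs3]
    simp only [cnt]
    split_ifs <;> omega
  rw [csd, if_neg hs3]
  set s4 := s3 - 1 - d with hs4d
  set L4 := L3 - (d + 1 - s3) with hL4d
  by_cases hs4 : s4 = 0
  · rw [csd, if_pos hs4]
    simp only [cnt]
    split_ifs <;> omega
  rw [csd, if_neg hs4, csd]
  exact Nat.zero_le _

lemma pn_of_constraints {a b c d e : ℕ} (h1 : a ≤ b) (h2 : a ≤ c) (h3 : a ≤ d)
    (h4 : a + b ≤ c + d) : IsPrefixNormal (wordOf [a,b,c,d,e]) := by
  intro u hu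
  obtain ⟨s, t, hst⟩ := hu
  have hdrop : (wordOf [a,b,c,d,e]).drop s.length = u ++ t := by
    rw [← hst, List.drop_append]
    simp
  have hu_eq : u.count true = (((wordOf [a,b,c,d,e]).drop s.length).take u.length).count true := by
    rw [hdrop, List.take_append]
    simp
  rw [hu_eq, csd_drop, cnt_take]
  exact key_ineq h1 h2 h3 h4 _ _

lemma constraints_of_pn {a b c d e : ℕ} (h : IsPrefixNormal (wordOf [a,b,c,d,e])) :
    a ≤ b ∧ a ≤ c ∧ a ≤ d ∧ a + b ≤ c + d := by
  have hw : wordOf [a,b,c,d,e] = true :: (List.replicate a false ++ (true :: (List.replicate b false ++ (true :: (List.replicate c false ++ (true :: (List.replicate d false ++ (true :: (List.replicate e false ++ []))))))))) := by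
    simp [wordOf]
  -- witness for a ≤ b
  have hb : a ≤ b := by
    have hinf : (true :: (List.replicate b false ++ [true])) <:+: wordOf [a,b,c,d,e] := by
      refine ⟨true :: List.replicate a false,
        List.replicate c false ++ (true :: (List.replicate d false ++ (true :: List.replicate e false))), ?_⟩
      rw [hw]; simp
    have := h _ hinf
    have hlen : (true :: (List.replicate b false ++ [true])).length = b + 2 := by simp
    rw [hlen] at this
    have hcu : (true :: (List.replicate b false ++ [true])).count true = 2 := by
      simp [List.count_cons, List.count_append, List.count_replicate]
    rw [hcu, cnt_take] at this
    simp only [cnt] at this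
    split_ifs at this <;> omega
  have hc : a ≤ c := by
    have hinf : (true :: (List.replicate c false ++ [true])) <:+: wordOf [a,b,c,d,e] := by
      refine ⟨true :: (List.replicate a false ++ (true :: List.replicate b false)),
        List.replicate d false ++ (true :: List.replicate e false), ?_⟩
      rw [hw]; simp
    have := h _ hinf
    have hlen : (true :: (List.replicate c false ++ [true])).length = c + 2 := by simp
    rw [hlen] at this
    have hcu : (true :: (List.replicate c false ++ [true])).count true = 2 := by
      simp [List.count_cons, List.count_append, List.count_replicate]
    rw [hcu, cnt_take] at this
    simp only [cnt] at this
    split_ifs at this <;> omega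
  have hd : a ≤ d := by
    have hinf : (true :: (List.replicate d false ++ [true])) <:+: wordOf [a,b,c,d,e] := by
      refine ⟨true :: (List.replicate a false ++ (true :: (List.replicate b false ++ (true :: List.replicate c false)))),
        List.replicate e false, ?_⟩
      rw [hw]; simp
    have := h _ hinf
    have hlen : (true :: (List.replicate d false ++ [true])).length = d + 2 := by simp
    rw [hlen] at this
    have hcu : (true :: (List.replicate d false ++ [true])).count true = 2 := by
      simp [List.count_cons, List.count_append, List.count_replicate]
    rw [hcu, cnt_take] at this
    simp only [cnt] at this
    split_ifs at this <;> omega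
  have hcd : a + b ≤ c + d := by
    have hinf : (true :: (List.replicate c false ++ (true :: (List.replicate d false ++ [true]))))
        <:+: wordOf [a,b,c,d,e] := by
      refine ⟨true :: (List.replicate a false ++ (true :: List.replicate b false)),
        List.replicate e false, ?_⟩
      rw [hw]; simp
    have := h _ hinf
    have hlen : (true :: (List.replicate c false ++ (true :: (List.replicate d false ++ [true])))).length
        = c + d + 3 := by simp; omega
    rw [hlen] at this
    have hcu : (true :: (List.replicate c false ++ (true :: (List.replicate d false ++ [true])))).count true = 3 := by
      simp [List.count_cons, List.count_append, List.count_replicate]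
    rw [hcu, cnt_take] at this
    simp only [cnt] at this
    split_ifs at this <;> omega
  exact ⟨hb, hc, hd, hcd⟩

lemma decomp : ∀ w : List Bool, ∃ (k : ℕ) (gs : List ℕ),
    w = List.replicate k false ++ wordOf gs ∧ gs.length = w.count true
  | [] => ⟨0, [], by simp [wordOf]⟩
  | (x :: w) => by
      obtain ⟨k, gs, hw, hlen⟩ := decomp w
      cases x with
      | false =>
          exact ⟨k + 1, gs, by simp [hw, List.replicate_succ, List.count_cons, hlen]⟩
      | true =>
          refine ⟨0, k :: gs, ?_, ?_⟩
          · simp [wordOf, hw]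
          · simp [List.count_cons, hlen]

lemma wordOf_inj : ∀ gs gs' : List ℕ, gs.length = gs'.length → wordOf gs = wordOf gs' → gs = gs'
  | [], [], _, _ => rfl
  | g :: gs, g' :: gs', hlen, heq => by
      rw [wordOf, wordOf] at heq
      simp only [List.cons.injEq] at heq
      obtain ⟨-, heq⟩ := heq
      have hg : g = g' := by
        by_contra hne
        -- compare entries at index min g g'
        rcases Nat.lt_or_ge g g' with hlt | hge
        · have h1 := congrArg (fun l => l[g]?) heq
          rw [List.getElem?_append_right (by simp)] at h1
          rw [List.getElem?_append_left (by simp [hlt])] at h1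
          simp [List.getElem?_replicate, hlt] at h1
          cases gs with
          | nil =>
              simp [wordOf] at h1
          | cons h t => simp [wordOf] at h1
        · have hlt : g' < g := by omega
          have h1 := congrArg (fun l => l[g']?) heq.symm
          rw [List.getElem?_append_right (by simp)] at h1
          rw [List.getElem?_append_left (by simp [hlt])] at h1
          simp [List.getElem?_replicate, hlt] at h1
          cases gs' with
          | nil => simp [wordOf] at h1
          | cons h t => simp [wordOf] at h1
      subst hg
      have := List.append_cancel_left heq
      have htail := wordOf_inj gs gs' (by simpa using hlen) this
      rw [htail]

abbrev T5 := ℕ × ℕ × ℕ × ℕ × ℕ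

def box5 (n : ℕ) : Finset T5 :=
  Finset.range (n+1) ×ˢ Finset.range (n+1) ×ˢ Finset.range (n+1) ×ˢ Finset.range (n+1) ×ˢ
    Finset.range (n+1)

def Gfin (n : ℕ) : Finset T5 := (box5 n).filter fun x =>
  x.1 + x.2.1 + x.2.2.1 + x.2.2.2.1 + x.2.2.2.2 + 5 = n ∧ x.1 ≤ x.2.1 ∧ x.1 ≤ x.2.2.1 ∧
    x.1 ≤ x.2.2.2.1 ∧ x.1 + x.2.1 ≤ x.2.2.1 + x.2.2.2.1

lemma mem_Gfin {n a b c d e : ℕ} : (a,b,c,d,e) ∈ Gfin n ↔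
    a + b + c + d + e + 5 = n ∧ a ≤ b ∧ a ≤ c ∧ a ≤ d ∧ a + b ≤ c + d := by
  simp only [Gfin, box5, Finset.mem_filter, Finset.mem_product, Finset.mem_range]
  omega

def gword (x : T5) : List Bool := wordOf [x.1, x.2.1, x.2.2.1, x.2.2.2.1, x.2.2.2.2]

lemma gword_spec {n : ℕ} {x : T5} (hx : x ∈ Gfin n) :
    (gword x).length = n ∧ (gword x).count true = 5 ∧ IsPrefixNormal (gword x) := by
  obtain ⟨a, b, c, d, e⟩ := x
  rw [mem_Gfin] at hx
  obtain ⟨hsum, h1, h2, h3, h4⟩ := hx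
  refine ⟨?_, ?_, pn_of_constraints h1 h2 h3 h4⟩
  · rw [gword, length_wordOf]
    simp only [List.length_cons, List.length_nil, List.sum_cons, List.sum_nil]
    omega
  · rw [gword, count_wordOf]
    rfl

lemma pnwd_eq_card (n : ℕ) : pnwd n 5 = (Gfin n).card := by
  have hf : Function.Bijective (fun x : {x : T5 // x ∈ Gfin n} =>
      (⟨gword x.1, gword_spec x.2⟩ :
      {w : List Bool // w.length = n ∧ w.count true = 5 ∧ IsPrefixNormal w})) := by
    constructor
    · rintro ⟨⟨a,b,c,d,e⟩, hx⟩ ⟨⟨a',b',c',d',e'⟩, hy⟩ h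
      simp only [Subtype.mk.injEq, gword] at h
      have := wordOf_inj _ _ (by simp) h
      simp only [List.cons.injEq] at this
      apply Subtype.ext
      obtain ⟨h1, h2, h3, h4, h5, -⟩ := this
      simp [h1, h2, h3, h4, h5]
    · rintro ⟨w, hlen, hcount, hpn⟩
      obtain ⟨k, gs, hw, hglen⟩ := decomp w
      have hk : k = 0 := by
        by_contra hkne
        have htmem : true ∈ w := by
          rw [← List.count_pos_iff]
          omega
        obtain ⟨s, t, hst⟩ := List.append_of_mem htmem
        have hinf : [true] <:+: w := ⟨s, t, by rw [hst]; simp⟩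
        have h1 := hpn [true] hinf
        have hw1 : w.take 1 = [false] := by
          rw [hw]
          obtain ⟨k', rfl⟩ : ∃ k', k = k' + 1 := ⟨k - 1, by omega⟩
          simp [List.replicate_succ]
        rw [List.length_singleton, hw1] at h1
        simp at h1
      subst hk
      simp only [List.replicate_zero, List.nil_append] at hw
      rw [hw, count_wordOf] at hcount
      match gs, hcount with
      | [a,b,c,d,e], _ =>
        rw [hw] at hpn hlen
        obtain ⟨h1, h2, h3, h4⟩ := constraints_of_pn hpn
        rw [length_wordOf] at hlen
        simp only [List.length_cons, List.length_nil, List.sum_cons, List.sum_nil] at hlen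
        refine ⟨⟨(a,b,c,d,e), mem_Gfin.2 ⟨by omega, h1, h2, h3, h4⟩⟩, ?_⟩
        apply Subtype.ext
        simp [hw, gword]
  have := Nat.card_eq_of_bijective _ hf
  rw [pnwd, ← this]
  simp [Nat.card_eq_fintype_card, Fintype.card_coe]

abbrev T4 := ℕ × ℕ × ℕ × ℕ
abbrev T3 := ℕ × ℕ × ℕ

def K1fin (n : ℕ) : Finset T4 :=
  ((Finset.range (n+1) ×ˢ Finset.range (n+1) ×ˢ Finset.range (n+1) ×ˢ Finset.range (n+1))).filter
    fun x => x.1 + x.2.1 + x.2.2.1 + x.2.2.2 + 5 = n ∧ x.1 ≤ x.2.1 + x.2.2.1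

def K2fin (n : ℕ) : Finset T3 :=
  ((Finset.range (n+1) ×ˢ Finset.range (n+1) ×ˢ Finset.range (n+1))).filter
    fun x => x.1 + x.2.1 + x.2.2 + 5 = n ∧ x.1 ≤ x.2.1 + x.2.2

lemma mem_K1fin {n a b c d : ℕ} : (a,b,c,d) ∈ K1fin n ↔
    a + b + c + d + 5 = n ∧ a ≤ b + c := by
  simp only [K1fin, Finset.mem_filter, Finset.mem_product, Finset.mem_range]
  omega

lemma mem_K2fin {n a b c : ℕ} : (a,b,c) ∈ K2fin n ↔
    a + b + c + 5 = n ∧ a ≤ b + c := by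
  simp only [K2fin, Finset.mem_filter, Finset.mem_product, Finset.mem_range]
  omega

set_option maxHeartbeats 1000000 in
lemma Gfin_card_rec (n : ℕ) :
    (Gfin n).card = (K1fin n).card + (if 4 ≤ n then (Gfin (n-4)).card else 0) := by
  classical
  have hsplit := Finset.card_filter_add_card_filter_not
    (s := Gfin n) (p := fun x => x.1 = 0)
  have h0 : ((Gfin n).filter fun x => x.1 = 0).card = (K1fin n).card := by
    apply Finset.card_nbij' (i := fun x => (x.2.1, x.2.2.1, x.2.2.2.1, x.2.2.2.2)) (j := fun y => ((0:ℕ), y.1, y.2.1, y.2.2.1, y.2.2.2))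
    ·
      rintro ⟨a,b,c,d,e⟩ hx
      simp only [Finset.mem_coe, Finset.mem_filter, mem_Gfin, mem_K1fin, mem_K2fin, Prod.mk.injEq, Nat.zero_le, zero_add, and_true, true_and] at hx ⊢
      omega
    ·
      rintro ⟨a,b,c,d⟩ hy
      simp only [Finset.mem_coe, Finset.mem_filter, mem_Gfin, mem_K1fin, mem_K2fin, Prod.mk.injEq, Nat.zero_le, zero_add, and_true, true_and] at hy ⊢
      omega
    ·
      rintro ⟨a,b,c,d,e⟩ hx
      simp only [Finset.mem_coe, Finset.mem_filter, mem_Gfin, mem_K1fin, mem_K2fin, Prod.mk.injEq, Nat.zero_le, zero_add, and_true, true_and] at hx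
      simp only [Prod.mk.injEq, and_true, true_and]
      all_goals omega
    ·
      rintro ⟨a,b,c,d⟩ hy
      simp only [Finset.mem_coe, Finset.mem_filter, mem_Gfin, mem_K1fin, mem_K2fin, Prod.mk.injEq, Nat.zero_le, zero_add, and_true, true_and] at hy
      simp only [Prod.mk.injEq, and_true, true_and]
      all_goals omega
  have h1 : ((Gfin n).filter fun x => ¬ x.1 = 0).card
      = (if 4 ≤ n then (Gfin (n-4)).card else 0) := by
    split_ifs with h4
    · apply Finset.card_nbij' (i := fun x => (x.1 - 1, x.2.1 - 1, x.2.2.1 - 1, x.2.2.2.1 - 1, x.2.2.2.2)) (j := fun y => (y.1 + 1, y.2.1 + 1, y.2.2.1 + 1, y.2.2.2.1 + 1, y.2.2.2.2))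
      ·
        rintro ⟨a,b,c,d,e⟩ hx
        simp only [Finset.mem_coe, Finset.mem_filter, mem_Gfin, mem_K1fin, mem_K2fin, Prod.mk.injEq, Nat.zero_le, zero_add, and_true, true_and] at hx ⊢
        omega
      ·
        rintro ⟨a,b,c,d,e⟩ hy
        simp only [Finset.mem_coe, Finset.mem_filter, mem_Gfin, mem_K1fin, mem_K2fin, Prod.mk.injEq, Nat.zero_le, zero_add, and_true, true_and] at hy ⊢
        omega
      ·
        rintro ⟨a,b,c,d,e⟩ hx
        simp only [Finset.mem_coe, Finset.mem_filter, mem_Gfin, mem_K1fin, mem_K2fin, Prod.mk.injEq, Nat.zero_le, zero_add, and_true, true_and] at hx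
        simp only [Prod.mk.injEq, and_true, true_and]
        all_goals omega
      ·
        rintro ⟨a,b,c,d,e⟩ hy
        simp only [Finset.mem_coe, Finset.mem_filter, mem_Gfin, mem_K1fin, mem_K2fin, Prod.mk.injEq, Nat.zero_le, zero_add, and_true, true_and] at hy
        simp only [Prod.mk.injEq, and_true, true_and]
        all_goals omega
    · rw [Finset.card_eq_zero]
      apply Finset.eq_empty_of_forall_notMem
      rintro ⟨a,b,c,d,e⟩ hx
      rw [Finset.mem_filter, mem_Gfin] at hx
      omega
  omega

set_option maxHeartbeats 1000000 in
lemma K1fin_card_rec (n : ℕ) :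
    (K1fin (n+1)).card = (K1fin n).card + (K2fin (n+1)).card := by
  classical
  have hsplit := Finset.card_filter_add_card_filter_not
    (s := K1fin (n+1)) (p := fun x => x.2.2.2 = 0)
  have h0 : ((K1fin (n+1)).filter fun x => x.2.2.2 = 0).card = (K2fin (n+1)).card := by
    apply Finset.card_nbij' (i := fun x => (x.1, x.2.1, x.2.2.1)) (j := fun y => (y.1, y.2.1, y.2.2, (0:ℕ)))
    ·
      rintro ⟨a,b,c,d⟩ hx
      simp only [Finset.mem_coe, Finset.mem_filter, mem_Gfin, mem_K1fin, mem_K2fin, Prod.mk.injEq, Nat.zero_le, zero_add, and_true, true_and] at hx ⊢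
      omega
    ·
      rintro ⟨a,b,c⟩ hy
      simp only [Finset.mem_coe, Finset.mem_filter, mem_Gfin, mem_K1fin, mem_K2fin, Prod.mk.injEq, Nat.zero_le, zero_add, and_true, true_and] at hy ⊢
      omega
    ·
      rintro ⟨a,b,c,d⟩ hx
      simp only [Finset.mem_coe, Finset.mem_filter, mem_Gfin, mem_K1fin, mem_K2fin, Prod.mk.injEq, Nat.zero_le, zero_add, and_true, true_and] at hx
      simp only [Prod.mk.injEq, and_true, true_and]
      all_goals omega
    ·
      rintro ⟨a,b,c⟩ hy
      simp only [Finset.mem_coe, Finset.mem_filter, mem_Gfin, mem_K1fin, mem_K2fin, Prod.mk.injEq, Nat.zero_le, zero_add, and_true, true_and] at hy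
      simp only [Prod.mk.injEq, and_true, true_and]
      all_goals omega
  have h1 : ((K1fin (n+1)).filter fun x => ¬ x.2.2.2 = 0).card = (K1fin n).card := by
    apply Finset.card_nbij' (i := fun x => (x.1, x.2.1, x.2.2.1, x.2.2.2 - 1)) (j := fun y => (y.1, y.2.1, y.2.2.1, y.2.2.2 + 1))
    ·
      rintro ⟨a,b,c,d⟩ hx
      simp only [Finset.mem_coe, Finset.mem_filter, mem_Gfin, mem_K1fin, mem_K2fin, Prod.mk.injEq, Nat.zero_le, zero_add, and_true, true_and] at hx ⊢
      omega
    ·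
      rintro ⟨a,b,c,d⟩ hy
      simp only [Finset.mem_coe, Finset.mem_filter, mem_Gfin, mem_K1fin, mem_K2fin, Prod.mk.injEq, Nat.zero_le, zero_add, and_true, true_and] at hy ⊢
      omega
    ·
      rintro ⟨a,b,c,d⟩ hx
      simp only [Finset.mem_coe, Finset.mem_filter, mem_Gfin, mem_K1fin, mem_K2fin, Prod.mk.injEq, Nat.zero_le, zero_add, and_true, true_and] at hx
      simp only [Prod.mk.injEq, and_true, true_and]
      all_goals omega
    ·
      rintro ⟨a,b,c,d⟩ hy
      simp only [Finset.mem_coe, Finset.mem_filter, mem_Gfin, mem_K1fin, mem_K2fin, Prod.mk.injEq, Nat.zero_le, zero_add, and_true, true_and] at hy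
      simp only [Prod.mk.injEq, and_true, true_and]
      all_goals omega
  omega

lemma Gfin_card_small {n : ℕ} (h : n < 5) : (Gfin n).card = 0 := by
  rw [Finset.card_eq_zero]
  apply Finset.eq_empty_of_forall_notMem
  rintro ⟨a,b,c,d,e⟩ hx
  rw [mem_Gfin] at hx
  omega

lemma K1fin_card_small {n : ℕ} (h : n < 5) : (K1fin n).card = 0 := by
  rw [Finset.card_eq_zero]
  apply Finset.eq_empty_of_forall_notMem
  rintro ⟨a,b,c,d⟩ hx
  rw [mem_K1fin] at hx
  omega

lemma K2fin_card_small {n : ℕ} (h : n < 5) : (K2fin n).card = 0 := by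
  rw [Finset.card_eq_zero]
  apply Finset.eq_empty_of_forall_notMem
  rintro ⟨a,b,c⟩ hx
  rw [mem_K2fin] at hx
  omega

def k2 (m : ℕ) : ℕ :=
  if m % 4 = 0 then (2*(m/4)+1)*(3*(m/4)+1)
  else if m % 4 = 1 then (2*(m/4)+1)*(3*(m/4)+2)
  else if m % 4 = 2 then ((m/4)+1)*(6*(m/4)+5)
  else ((m/4)+1)*(6*(m/4)+7)

lemma k2_0 (w : ℕ) : k2 (4*w) = (2*w+1)*(3*w+1) := by
  have h1 : (4*w) % 4 = 0 := by omega
  have h2 : (4*w) / 4 = w := by omega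
  simp [k2, h1, h2]

lemma k2_1 (w : ℕ) : k2 (4*w+1) = (2*w+1)*(3*w+2) := by
  have h1 : (4*w+1) % 4 = 1 := by omega
  have h2 : (4*w+1) / 4 = w := by omega
  simp [k2, h1, h2]

lemma k2_2 (w : ℕ) : k2 (4*w+2) = (w+1)*(6*w+5) := by
  have h1 : (4*w+2) % 4 = 2 := by omega
  have h2 : (4*w+2) / 4 = w := by omega
  simp [k2, h1, h2]

lemma k2_3 (w : ℕ) : k2 (4*w+3) = (w+1)*(6*w+7) := by
  have h1 : (4*w+3) % 4 = 3 := by omega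
  have h2 : (4*w+3) / 4 = w := by omega
  simp [k2, h1, h2]

set_option maxHeartbeats 1000000 in
lemma K2fin_card (m : ℕ) : (K2fin (m+5)).card = k2 m := by
  classical
  have hmem : ∀ x ∈ K2fin (m+5), x.1 ∈ Finset.range (m+1) := by
    rintro ⟨a,b,c⟩ hx
    rw [mem_K2fin] at hx
    simp only [Finset.mem_coe, Finset.mem_range]
    omega
  rw [Finset.card_eq_sum_card_fiberwise hmem]
  have hfval : ∀ β ∈ Finset.range (m+1),
      ((K2fin (m+5)).filter fun x => x.1 = β).card = if 2*β ≤ m then m+1-β else 0 := by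
    intro β hβ
    split_ifs with hb
    · rw [show m+1-β = m-β+1 from by omega, ← Finset.card_range (m-β+1)]
      apply Finset.card_nbij' (i := fun x => x.2.1) (j := fun c => (β, c, m-β-c))
      · rintro ⟨a,b,c⟩ hx
        simp only [Finset.mem_coe, Finset.mem_filter, mem_K2fin] at hx
        simp only [Finset.mem_coe, Finset.mem_range]
        omega
      · intro c hc
        simp only [Finset.mem_coe, Finset.mem_range] at hc
        simp only [Finset.mem_coe, Finset.mem_filter, mem_K2fin, and_true]
        omega
      · rintro ⟨a,b,c⟩ hx
        simp only [Finset.mem_coe, Finset.mem_filter, mem_K2fin] at hx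
        simp only [Prod.mk.injEq, true_and]
        omega
      · intro c hc
        rfl
    · rw [Finset.card_eq_zero]
      apply Finset.eq_empty_of_forall_notMem
      rintro ⟨a,b,c⟩ hx
      simp only [Finset.mem_coe, Finset.mem_filter, mem_K2fin] at hx
      omega
  rw [Finset.sum_congr rfl hfval, ← Finset.sum_filter]
  have hfe : (Finset.range (m+1)).filter (fun β => 2*β ≤ m) = Finset.range (m/2+1) := by
    ext β
    simp only [Finset.mem_coe, Finset.mem_filter, Finset.mem_range]
    omega
  rw [hfe]
  have h2 : (∑ β ∈ Finset.range (m/2+1), (m+1-β)) * 2 = k2 m * 2 := by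
    rw [← Finset.sum_range_reflect]
    have hcong : ∀ j ∈ Finset.range (m/2+1), m+1-(m/2+1-1-j) = (m+1-m/2) + j := by
      intro j hj
      simp only [Finset.mem_coe, Finset.mem_range] at hj
      omega
    rw [Finset.sum_congr rfl hcong, Finset.sum_add_distrib, Finset.sum_const, Finset.card_range,
      smul_eq_mul, add_mul, Finset.sum_range_id_mul_two]
    obtain ⟨w, r, hr, rfl⟩ : ∃ w r, r < 4 ∧ m = 4*w + r := ⟨m/4, m%4, by omega, by omega⟩
    interval_cases r
    · simp only [Nat.add_zero]
      rw [k2_0, show (4*w)/2 = 2*w from by omega, show 4*w+1-2*w = 2*w+1 from by omega, Nat.add_sub_cancel]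
      ring
    · rw [k2_1, show (4*w+1)/2 = 2*w from by omega, show 4*w+1+1-2*w = 2*w+2 from by omega, Nat.add_sub_cancel]
      ring
    · rw [k2_2, show (4*w+2)/2 = 2*w+1 from by omega, show 4*w+2+1-(2*w+1) = 2*w+2 from by omega, Nat.add_sub_cancel]
      ring
    · rw [k2_3, show (4*w+3)/2 = 2*w+1 from by omega, show 4*w+3+1-(2*w+1) = 2*w+3 from by omega, Nat.add_sub_cancel]
      ring
  omega

lemma k2_rec (m : ℕ) : k2 (m+5) + 2*k2 (m+2) + k2 (m+1) = k2 (m+4) + 2*k2 (m+3) + k2 m := by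
  obtain ⟨w, r, hr, rfl⟩ : ∃ w r, r < 4 ∧ m = 4*w + r := ⟨m/4, m%4, by omega, by omega⟩
  interval_cases r
  · simp only [Nat.add_zero]
    rw [show 4*w+5 = 4*(w+1)+1 from by ring, show 4*w+2 = 4*w+2 from rfl,
      show 4*w+4 = 4*(w+1) from by ring, show 4*w+3 = 4*w+3 from rfl,
      k2_1, k2_2, k2_0, k2_3, k2_0, k2_1]
    ring
  · rw [show 4*w+1+5 = 4*(w+1)+2 from by ring, show 4*w+1+2 = 4*w+3 from by ring,
      show 4*w+1+1 = 4*w+2 from by ring, show 4*w+1+4 = 4*(w+1)+1 from by ring,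
      show 4*w+1+3 = 4*(w+1) from by ring,
      k2_2, k2_3, k2_2, k2_1, k2_0, k2_1]
    ring
  · rw [show 4*w+2+5 = 4*(w+1)+3 from by ring, show 4*w+2+2 = 4*(w+1) from by ring,
      show 4*w+2+1 = 4*w+3 from by ring, show 4*w+2+4 = 4*(w+1)+2 from by ring,
      show 4*w+2+3 = 4*(w+1)+1 from by ring,
      k2_3, k2_0, k2_3, k2_2, k2_1, k2_2]
    ring
  · rw [show 4*w+3+5 = 4*(w+2) from by ring, show 4*w+3+2 = 4*(w+1)+1 from by ring,
      show 4*w+3+1 = 4*(w+1) from by ring, show 4*w+3+4 = 4*(w+1)+3 from by ring,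
      show 4*w+3+3 = 4*(w+1)+2 from by ring,
      k2_0, k2_1, k2_0, k2_3, k2_2, k2_3]
    ring

lemma card_rec_final (m : ℕ) :
    (K2fin (m+10)).card + 2*(K2fin (m+7)).card + (K2fin (m+6)).card
      = (K2fin (m+9)).card + 2*(K2fin (m+8)).card + (K2fin (m+5)).card := by
  rw [show m+10 = (m+5)+5 from by ring, show m+9 = (m+4)+5 from by ring,
    show m+8 = (m+3)+5 from by ring, show m+7 = (m+2)+5 from by ring,
    show m+6 = (m+1)+5 from by ring,
    K2fin_card, K2fin_card, K2fin_card, K2fin_card, K2fin_card, K2fin_card]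
  exact k2_rec m

open PowerSeries

noncomputable def Aser : PowerSeries ℤ := PowerSeries.mk fun n => ((Gfin n).card : ℤ)
noncomputable def K1ser : PowerSeries ℤ := PowerSeries.mk fun n => ((K1fin n).card : ℤ)
noncomputable def K2ser : PowerSeries ℤ := PowerSeries.mk fun n => ((K2fin n).card : ℤ)

lemma E1 : (1 - (X : PowerSeries ℤ)^4) * Aser = K1ser := by
  apply PowerSeries.ext
  intro n
  rw [sub_mul, one_mul, map_sub, PowerSeries.coeff_X_pow_mul']
  simp only [Aser, K1ser, PowerSeries.coeff_mk]
  have hrec := Gfin_card_rec n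
  split_ifs at hrec ⊢ with h
  · push_cast
    omega
  · push_cast
    omega

lemma E2 : (1 - (X : PowerSeries ℤ)^1) * K1ser = K2ser := by
  apply PowerSeries.ext
  intro n
  rw [sub_mul, one_mul, map_sub, PowerSeries.coeff_X_pow_mul']
  simp only [K1ser, K2ser, PowerSeries.coeff_mk]
  cases n with
  | zero =>
      rw [if_neg (by omega)]
      rw [K1fin_card_small (by omega), K2fin_card_small (by omega)]
      simp
  | succ k =>
      rw [if_pos (by omega)]
      simp only [Nat.add_sub_cancel]
      have hrec := K1fin_card_rec k
      push_cast
      omega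

lemma E3 : (1 - (X : PowerSeries ℤ)) * (1 - X^2)^2 * K2ser = X^5 * (1 + X + X^2) := by
  have hL : (1 - (X : PowerSeries ℤ)) * (1 - X^2)^2 * K2ser
      = K2ser - X^1*K2ser - X^2*K2ser - X^2*K2ser + X^3*K2ser + X^3*K2ser + X^4*K2ser
        - X^5*K2ser := by ring
  have hR : (X : PowerSeries ℤ)^5 * (1 + X + X^2) = X^5 + X^6 + X^7 := by ring
  rw [hL, hR]
  apply PowerSeries.ext
  intro n
  simp only [map_sub, map_add, PowerSeries.coeff_X_pow_mul', PowerSeries.coeff_X_pow,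
    K2ser, PowerSeries.coeff_mk]
  by_cases hn : n ≤ 9
  · have c0 : (K2fin 0).card = 0 := K2fin_card_small (by omega)
    have c1 : (K2fin 1).card = 0 := K2fin_card_small (by omega)
    have c2 : (K2fin 2).card = 0 := K2fin_card_small (by omega)
    have c3 : (K2fin 3).card = 0 := K2fin_card_small (by omega)
    have c4 : (K2fin 4).card = 0 := K2fin_card_small (by omega)
    have c5 : (K2fin 5).card = 1 := by rw [show (5:ℕ) = 0+5 from rfl, K2fin_card]; decide
    have c6 : (K2fin 6).card = 2 := by rw [show (6:ℕ) = 1+5 from rfl, K2fin_card]; decide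
    have c7 : (K2fin 7).card = 5 := by rw [show (7:ℕ) = 2+5 from rfl, K2fin_card]; decide
    have c8 : (K2fin 8).card = 7 := by rw [show (8:ℕ) = 3+5 from rfl, K2fin_card]; decide
    have c9 : (K2fin 9).card = 12 := by rw [show (9:ℕ) = 4+5 from rfl, K2fin_card]; decide
    interval_cases n <;> norm_num [c0, c1, c2, c3, c4, c5, c6, c7, c8, c9]
  · obtain ⟨m, rfl⟩ : ∃ m, n = m + 10 := ⟨n - 10, by omega⟩
    have hrec := card_rec_final m
    have e1 : m + 10 - 1 = m + 9 := by omega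
    have e2 : m + 10 - 2 = m + 8 := by omega
    have e3 : m + 10 - 3 = m + 7 := by omega
    have e4 : m + 10 - 4 = m + 6 := by omega
    have e5 : m + 10 - 5 = m + 5 := by omega
    rw [if_pos (by omega : (1:ℕ) ≤ m + 10), if_pos (by omega : (2:ℕ) ≤ m + 10),
      if_pos (by omega : (3:ℕ) ≤ m + 10), if_pos (by omega : (4:ℕ) ≤ m + 10),
      if_pos (by omega : (5:ℕ) ≤ m + 10), if_neg (by omega : ¬ m + 10 = 5),
      if_neg (by omega : ¬ m + 10 = 6), if_neg (by omega : ¬ m + 10 = 7),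
      e1, e2, e3, e4, e5]
    push_cast
    omega

lemma mk_eq_Aser :
    PowerSeries.mk (fun n => if n = 0 then 0 else (pnwd n 5 : ℤ)) = Aser := by
  apply PowerSeries.ext
  intro n
  simp only [Aser, PowerSeries.coeff_mk]
  split_ifs with h
  · subst h
    rw [Gfin_card_small (by omega)]
    simp
  · rw [pnwd_eq_card]

open PowerSeries in
theorem genFun_density_five :
    (1 - (X : PowerSeries ℤ) ^ 4) * (1 - X ^ 2) ^ 2 * (1 - X) ^ 2 *
      PowerSeries.mk (fun n => if n = 0 then 0 else (pnwd n 5 : ℤ)) =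
      X ^ 5 * (1 + X + X ^ 2) := by
  rw [mk_eq_Aser]
  calc (1 - (X : PowerSeries ℤ) ^ 4) * (1 - X ^ 2) ^ 2 * (1 - X) ^ 2 * Aser
      = (1 - X) * (1 - X^2)^2 * ((1 - X^1) * ((1 - X^4) * Aser)) := by ring
    _ = X ^ 5 * (1 + X + X ^ 2) := by rw [E1, E2, E3]
end

section
/- Let v and w be prefix normal binary words that both begin with the symbol 1. If v ≠ w, then the extension languages L_ext(v) and L_ext(w) are different, i.e., there exists a binary word w' that belongs to exactly one of L_ext(v) and L_ext(w). -/
namespace PNAux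

def F (x : List Bool) (j : ℕ) : ℕ := (x.take j).count true
def sg (x : List Bool) (i l : ℕ) : ℕ := ((x.drop i).take l).count true

lemma F_zero (x : List Bool) : F x 0 = 0 := rfl

lemma F_mono (x : List Bool) {a b : ℕ} (h : a ≤ b) : F x a ≤ F x b := by
  unfold F
  have h1 : x.take a = (x.take b).take a := by rw [List.take_take, min_eq_left h]
  rw [h1]
  exact ((x.take b).take_sublist a).count_le _

lemma F_le_count (x : List Bool) (l : ℕ) : F x l ≤ x.count true :=
  (x.take_sublist l).count_le _

lemma F_eq_count (x : List Bool) {l : ℕ} (h : x.length ≤ l) : F x l = x.count true := by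
  unfold F; rw [List.take_of_length_le h]

lemma count_split (x : List Bool) (i : ℕ) :
    x.count true = F x i + ((x.drop i).count true) := by
  conv_lhs => rw [← List.take_append_drop i x]
  rw [List.count_append]; rfl

lemma sg_le {x : List Bool} (hx : IsPrefixNormal x) (i l : ℕ) : sg x i l ≤ F x l := by
  have hinf : (x.drop i).take l <:+: x :=
    ((x.drop i).take_prefix l).isInfix.trans (x.drop_suffix i).isInfix
  calc sg x i l ≤ F x ((x.drop i).take l).length := hx _ hinf
    _ ≤ F x l := F_mono x (by simp [List.length_take])

lemma pn_of (x : List Bool) (h : ∀ i l, sg x i l ≤ F x l) : IsPrefixNormal x := by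
  intro u hu
  obtain ⟨s, t, hst⟩ := hu
  have hx : x = s ++ (u ++ t) := by rw [← hst, List.append_assoc]
  have hu' : (x.drop s.length).take u.length = u := by
    rw [hx, List.drop_left, List.take_left]
  have := h s.length u.length
  rwa [sg, hu'] at this

lemma F_subadd {x : List Bool} (hx : IsPrefixNormal x) (a b : ℕ) :
    F x (a + b) ≤ F x a + F x b := by
  have : F x (a + b) = F x a + sg x a b := by
    unfold F sg; rw [List.take_add, List.count_append]
  rw [this]
  exact Nat.add_le_add_left (sg_le hx a b) _

lemma sg_append (a b : List Bool) (i l : ℕ) :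
    sg (a ++ b) i l = sg a i l + sg b (i - a.length) (l - (a.length - i)) := by
  unfold sg
  rw [List.drop_append, List.take_append,
    List.count_append, List.length_drop]

lemma F_append (a b : List Bool) (l : ℕ) :
    F (a ++ b) l = F a l + F b (l - a.length) := by
  unfold F
  rw [List.take_append, List.count_append]

lemma sg_replicate (N i l : ℕ) : sg (List.replicate N false) i l = 0 := by
  simp [sg, List.drop_replicate, List.take_replicate, List.count_replicate]

lemma F_replicate (N l : ℕ) : F (List.replicate N false) l = 0 := by
  simp [F, List.take_replicate, List.count_replicate]

lemma sg_of_length_le {x : List Bool} {i : ℕ} (h : x.length ≤ i) (l : ℕ) : sg x i l = 0 := by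
  simp [sg, List.drop_eq_nil_of_le h]


lemma sg_full {x : List Bool} {i l : ℕ} (h : x.length ≤ i + l) :
    sg x i l = (x.drop i).count true := by
  unfold sg
  rw [List.take_of_length_le (by simp [List.length_drop]; omega)]

lemma F_one_le {x : List Bool} {t : List Bool} (hx : x = true :: t) {l : ℕ} (hl : 1 ≤ l) :
    1 ≤ F x l := by
  have : F x 1 = 1 := by subst hx; rfl
  calc 1 = F x 1 := this.symm
    _ ≤ F x l := F_mono x hl

/-- Main construction lemma: appending a block of zeroes of length ≥ |x| and then a
suitable word `u` preserves prefix normality. -/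
lemma G (x u : List Bool) (N : ℕ) (hx : IsPrefixNormal x) (hN : x.length ≤ N)
    (hu : ∀ i l, sg u i l ≤ F u l)
    (hsub : ∀ a b, F u (a + b) ≤ F x a + F u b) :
    IsPrefixNormal (x ++ List.replicate N false ++ u) := by
  set n := x.length with hn
  rw [List.append_assoc]
  apply pn_of
  intro i l
  have hseg : sg (x ++ (List.replicate N false ++ u)) i l =
      sg x i l + sg u ((i - n) - N) ((l - (n - i)) - (N - (i - n))) := by
    rw [sg_append, sg_append, sg_replicate, List.length_replicate, Nat.zero_add]
  have hF : F (x ++ (List.replicate N false ++ u)) l = F x l + F u ((l - n) - N) := by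
    rw [F_append, F_append, F_replicate, List.length_replicate, Nat.zero_add]
  rw [hseg, hF]
  set l₂ := (l - (n - i)) - (N - (i - n)) with hl₂
  set L := (l - n) - N with hL
  have hFu0 : ∀ a : ℕ, F u a ≤ F x a := fun a => by
    have := hsub a 0
    simpa [F_zero] using this
  by_cases hl2 : l₂ = 0
  · rw [hl2]
    have : sg u (i - n - N) 0 = 0 := by simp [sg]
    rw [this]
    have := sg_le hx i l
    omega
  -- now l₂ ≥ 1
  have hC : sg u (i - n - N) l₂ ≤ F u l₂ := hu _ _
  have hsplit : F u l₂ ≤ F x (l₂ - L) + F u L := by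
    calc F u l₂ ≤ F u ((l₂ - L) + L) := F_mono u (by omega)
      _ ≤ F x (l₂ - L) + F u L := hsub _ _
  by_cases hi : n ≤ i
  · have hA : sg x i l = 0 := sg_of_length_le hi l
    have h1 : F x (l₂ - L) ≤ F x l := F_mono x (by omega)
    omega
  · push_neg at hi
    have hiln : i - n = 0 := by omega
    have hll : n - i + N ≤ l := by omega
    have hln : n ≤ l := by omega
    have hA : sg x i l = (x.drop i).count true := sg_full (by omega)
    have hcs : x.count true = F x i + (x.drop i).count true := count_split x i
    have h1 : F x (l₂ - L) ≤ F x i := F_mono x (by omega)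
    have h2 : F x l = x.count true := F_eq_count x hln
    omega

lemma L1 {x : List Bool} (hx : IsPrefixNormal x) {N : ℕ} (hN : x.length ≤ N) :
    IsPrefixNormal (x ++ List.replicate N false ++ x) :=
  G x x N hx hN (sg_le hx) (F_subadd hx)

lemma L2 {x : List Bool} {t : List Bool} (hx : IsPrefixNormal x) (hxt : x = true :: t)
    {N : ℕ} (hN : x.length ≤ N) :
    IsPrefixNormal (x ++ List.replicate N false ++ [true]) := by
  apply G x [true] N hx hN
  · intro i l
    match i, l with
    | 0, l => exact le_refl _
    | (i+1), l => simp [sg, F]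
  · intro a b
    match a, b with
    | 0, 0 => simp [F]
    | 0, (b+1) => simp [F]
    | (a+1), 0 =>
        have h1 : F [true] (a + 1 + 0) ≤ 1 := by
          calc F [true] (a+1+0) ≤ [true].count true := F_le_count _ _
            _ = 1 := by simp
        have h2 : 1 ≤ F x (a+1) := F_one_le hxt (by omega)
        have h3 : F [true] 0 = 0 := rfl
        omega
    | (a+1), (b+1) =>
        have h1 : F [true] (a + 1 + (b+1)) ≤ 1 := by
          calc F [true] _ ≤ [true].count true := F_le_count _ _
            _ = 1 := by simp
        have h2 : 1 ≤ F [true] (b+1) := by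
          have : F [true] 1 = 1 := rfl
          calc 1 = F [true] 1 := rfl
            _ ≤ F [true] (b+1) := F_mono _ (by omega)
        omega

/-- From prefix normality of `a ++ 0^N ++ b` extract a pointwise bound on prefix counts. -/
lemma extract {a b : List Bool} {N : ℕ}
    (hy : IsPrefixNormal (a ++ List.replicate N false ++ b)) {j : ℕ}
    (hj : j ≤ a.length + N) : F b j ≤ F a j := by
  have hinf : b.take j <:+: a ++ List.replicate N false ++ b :=
    (b.take_prefix j).isInfix.trans (List.suffix_append _ b).isInfix
  have h := hy _ hinf
  set j' := (b.take j).length with hj'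
  have hj'j : j' ≤ j := by simp [hj', List.length_take]
  have hFy : F (a ++ List.replicate N false ++ b) j' = F a j' := by
    rw [List.append_assoc, F_append, F_append, F_replicate, List.length_replicate,
      Nat.zero_add]
    have : (j' - a.length) - N = 0 := by omega
    rw [this, F_zero]
    omega
  have hcnt : (b.take j).count true = F b j := rfl
  rw [hcnt] at h
  calc F b j ≤ F (a ++ List.replicate N false ++ b) j' := h
    _ = F a j' := hFy
    _ ≤ F a j := F_mono a hj'j

lemma take_eq (v w : List Bool) : ∀ k, k ≤ v.length → k ≤ w.length →
    (∀ j, j ≤ k → F v j = F w j) → v.take k = w.take k := by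
  intro k
  induction k with
  | zero => intro _ _ _; simp
  | succ k ih =>
    intro hk hk' h
    have hkv : k < v.length := by omega
    have hkw : k < w.length := by omega
    have ihh := ih (by omega) (by omega) (fun j hj => h j (by omega))
    have h1 : F v (k+1) = F v k + ([v[k]].count true) := by
      unfold F
      rw [List.take_succ, List.getElem?_eq_getElem hkv, List.count_append]
      simp
    have h2 : F w (k+1) = F w k + ([w[k]].count true) := by
      unfold F
      rw [List.take_succ, List.getElem?_eq_getElem hkw, List.count_append]
      simp
    have hb : v[k] = w[k] := by
      have h3 := h (k+1) le_rfl
      have h4 := h k (by omega)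
      rw [h1, h2, h4] at h3
      have h5 : ([v[k]].count true) = ([w[k]].count true) := by omega
      cases hbv : v[k] <;> cases hbw : w[k] <;> simp [hbv, hbw] at h5 ⊢
    rw [List.take_succ, List.take_succ, ihh,
      List.getElem?_eq_getElem hkv, List.getElem?_eq_getElem hkw, hb]

lemma key (v w : List Bool)
    (hv : IsPrefixNormal v) (hw : IsPrefixNormal w)
    (hv1 : v.head? = some true) (hw1 : w.head? = some true)
    (H : ∀ z, IsPrefixNormal (v ++ z) ↔ IsPrefixNormal (w ++ z))
    (hlen : v.length ≤ w.length) : v = w := by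
  obtain ⟨tv, hvt⟩ : ∃ t, v = true :: t := by
    cases v with
    | nil => simp at hv1
    | cons a t => exact ⟨t, by simp at hv1; rw [hv1]⟩
  set n := v.length with hn
  set m := w.length with hm
  set N := n + m with hN
  have hn1 : 1 ≤ n := by rw [hvt] at hn; simp [hn]
  -- PN (v ++ 0^N ++ w) and PN (w ++ 0^N ++ v)
  have P2 : IsPrefixNormal (v ++ List.replicate N false ++ w) := by
    have h0 := L1 hw (show w.length ≤ N by omega)
    have h1 : IsPrefixNormal (w ++ (List.replicate N false ++ w)) := by
      rwa [List.append_assoc] at h0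
    have h2 := (H _).mpr h1
    rwa [← List.append_assoc] at h2
  have P1 : IsPrefixNormal (w ++ List.replicate N false ++ v) := by
    have h0 := L1 hv (show v.length ≤ N by omega)
    have h1 : IsPrefixNormal (v ++ (List.replicate N false ++ v)) := by
      rwa [List.append_assoc] at h0
    have h2 := (H _).mp h1
    rwa [← List.append_assoc] at h2
  have hwv : ∀ j, j ≤ n + N → F w j ≤ F v j := fun j hj => extract P2 (by omega)
  have hvw : ∀ j, j ≤ m + N → F v j ≤ F w j := fun j hj => extract P1 (by omega)
  have hFeq : ∀ j, j ≤ m → F v j = F w j := fun j hj =>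
    le_antisymm (hvw j (by omega)) (hwv j (by omega))
  have htk : v.take n = w.take n :=
    take_eq v w n le_rfl (by omega) (fun j hj => hFeq j (by omega))
  have hvtake : v = w.take n := by
    rw [← htk, List.take_of_length_le (by omega)]
  rcases Nat.eq_or_lt_of_le hlen with heq | hlt
  · rw [hvtake, heq, List.take_of_length_le (by omega)]
  exfalso
  -- now n < m; derive w = v ++ 0^d, d ≥ 1
  set c := v.count true with hc
  have hcv : F v n = c := F_eq_count v (by omega)
  have hFwm : w.count true ≤ c := by
    have h0 := hwv m (by omega)
    have h1 : F w m = w.count true := F_eq_count w (by omega)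
    have h2 : F v m ≤ c := F_le_count v m
    omega
  have hdropcount : (w.drop n).count true = 0 := by
    have hsplit := count_split w n
    have hfw : F w n = c := by rw [← hFeq n (by omega)]; exact hcv
    omega
  have hallf : ∀ b ∈ w.drop n, b = false := by
    intro b hb
    cases b
    · rfl
    · exfalso
      have : true ∉ w.drop n := List.count_eq_zero.mp hdropcount
      exact this hb
  have hdrop : w.drop n = List.replicate (m - n) false := by
    have h0 := List.eq_replicate_of_mem hallf
    rwa [List.length_drop] at h0
  set d := m - n with hd
  have hd1 : 1 ≤ d := by omega
  have hwrep : w = v ++ List.replicate d false := by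
    conv_lhs => rw [← List.take_append_drop n w]
    rw [← hvtake, hdrop]
  -- pumping: can insert k*d zeroes
  have Hk : ∀ k z, IsPrefixNormal (v ++ z) ↔
      IsPrefixNormal (v ++ (List.replicate (k*d) false ++ z)) := by
    intro k
    induction k with
    | zero => intro z; simp
    | succ k ih =>
      intro z
      have hlst : w ++ (List.replicate (k*d) false ++ z)
          = v ++ (List.replicate ((k+1)*d) false ++ z) := by
        rw [hwrep, show (k+1)*d = d + k*d by ring, List.replicate_add]
        simp only [List.append_assoc]
      calc IsPrefixNormal (v ++ z)
          ↔ IsPrefixNormal (v ++ (List.replicate (k*d) false ++ z)) := ih z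
        _ ↔ IsPrefixNormal (w ++ (List.replicate (k*d) false ++ z)) := H _
        _ ↔ IsPrefixNormal (v ++ (List.replicate ((k+1)*d) false ++ z)) := by rw [hlst]
  -- the probe word
  set zs := List.replicate n false ++ (v ++ (List.replicate (3*n) false ++ [true])) with hzs
  have hx1 : IsPrefixNormal (v ++ List.replicate n false ++ v) := L1 hv le_rfl
  have hx1t : v ++ List.replicate n false ++ v
      = true :: (tv ++ List.replicate n false ++ v) := by
    rw [hvt]; simp
  have hy := L2 hx1 hx1t (show (v ++ List.replicate n false ++ v).length ≤ 3*n by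
    simp; omega)
  have hz1 : IsPrefixNormal (v ++ zs) := by
    have hyz : v ++ zs
        = v ++ List.replicate n false ++ v ++ List.replicate (3*n) false ++ [true] := by
      simp [hzs, List.append_assoc]
    rw [hyz]; exact hy
  have hzlen : zs.length = 5*n + 1 := by simp [hzs]; omega
  have hzcount : zs.count true = c + 1 := by
    simp [hzs, List.count_append, List.count_replicate]
    exact hc.symm
  set k := 5*n + 1 with hk
  have hK : zs.length ≤ k * d := by
    calc zs.length = k := by rw [hzlen]
      _ = k * 1 := (Nat.mul_one k).symm
      _ ≤ k * d := Nat.mul_le_mul_left k hd1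
  have hfin : IsPrefixNormal (v ++ (List.replicate (k*d) false ++ zs)) := (Hk k zs).mp hz1
  have hinf : zs <:+: v ++ (List.replicate (k*d) false ++ zs) :=
    ((List.suffix_append (List.replicate (k*d) false) zs).trans
      (List.suffix_append v _)).isInfix
  have hle := hfin zs hinf
  have hrhs : (List.take zs.length (v ++ (List.replicate (k*d) false ++ zs))).count true
      = c := by
    have e1 : (List.take zs.length (v ++ (List.replicate (k*d) false ++ zs))).count true
        = F v zs.length + (F zs ((zs.length - n) - (k*d))) := by
      rw [show ((List.take zs.length (v ++ (List.replicate (k*d) false ++ zs))).count true)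
          = F (v ++ (List.replicate (k*d) false ++ zs)) zs.length from rfl]
      rw [F_append, F_append, F_replicate, List.length_replicate, Nat.zero_add]
    have e2 : (zs.length - n) - (k*d) = 0 := by omega
    have e3 : F v zs.length = c := F_eq_count v (by omega)
    rw [e1, e2, e3, F_zero]
    omega
  rw [hrhs, hzcount] at hle
  omega

end PNAux


theorem extension_languages_differ (v w : List Bool)
    (hv : IsPrefixNormal v) (hw : IsPrefixNormal w)
    (hv1 : v.head? = some true) (hw1 : w.head? = some true)
    (hne : v ≠ w) :
    {w' : List Bool | IsPrefixNormal (v ++ w')} ≠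
    {w' : List Bool | IsPrefixNormal (w ++ w')} := by
  intro hset
  have H : ∀ z, IsPrefixNormal (v ++ z) ↔ IsPrefixNormal (w ++ z) := by
    intro z
    have := Set.ext_iff.mp hset z
    simpa using this
  rcases le_total v.length w.length with h | h
  · exact hne (PNAux.key v w hv hw hv1 hw1 H h)
  · exact hne ((PNAux.key w v hw hv hw1 hv1 (fun z => (H z).symm) h).symm)
end

section
/- For all n ≥ 1 and all d with 1 ≤ d ≤ n, the number of binary words w' of length n + d − 3 such that the concatenation 10·w' is prefix normal and has density d equals pnw(n,d), the number of prefix normal words of length n and density d. -/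
/-! ### Auxiliary machinery -/

def psi : List Bool → List Bool
  | [] => []
  | true :: t => true :: false :: psi t
  | false :: t => false :: psi t

def del : List Bool → List Bool
  | [] => []
  | [true] => [true]
  | false :: t => false :: del t
  | true :: true :: t => true :: del (true :: t)
  | true :: false :: t => true :: del t

lemma psi_append (a b : List Bool) : psi (a ++ b) = psi a ++ psi b := by
  induction a with
  | nil => rfl
  | cons x t ih => cases x <;> simp [psi, ih]

lemma psi_count (v : List Bool) : (psi v).count true = v.count true := by
  induction v with
  | nil => rfl
  | cons x t ih => cases x <;> simp [psi, ih]

lemma psi_length (v : List Bool) : (psi v).length = v.length + v.count true := by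
  induction v with
  | nil => rfl
  | cons x t ih => cases x <;> simp [psi, ih] <;> omega

lemma del_psi (v : List Bool) : del (psi v) = v := by
  induction v with
  | nil => rfl
  | cons x t ih =>
    cases x
    · cases h : psi t with
      | nil => rw [h] at ih; simp [del] at ih; subst ih; simp [psi, del]
      | cons y r =>
        cases y
        · rw [h] at ih; simp [del] at ih; simp [psi, del, h, ih]
        · simp [psi, del, h, h ▸ ih]
    · simp [psi, del, ih]

lemma psi_concat (v : List Bool) (hv : v ≠ []) : ∃ y, psi v = y ++ [false] := by
  induction v with
  | nil => simp at hv
  | cons x t ih =>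
    cases t with
    | nil => cases x <;> [exact ⟨[], rfl⟩; exact ⟨[true], rfl⟩]
    | cons c r =>
      obtain ⟨y, hy⟩ := ih (by simp)
      cases x
      · exact ⟨false :: y, by simp [psi, hy]⟩
      · exact ⟨true :: false :: y, by simp [psi, hy]⟩

lemma psi_del (x : List Bool) (h1 : ¬ ([true, true] <:+: x))
    (h2 : x = [] ∨ ∃ y, x = y ++ [false]) : psi (del x) = x := by
  induction x using del.induct with
  | case1 => rfl
  | case2 =>
    exfalso
    rcases h2 with h | ⟨y, hy⟩
    · simp at h
    · cases y with
      | nil => simp at hy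
      | cons a b => simpa using congrArg List.length hy
  | case3 t ih =>
    have nt : ¬ ([true, true] <:+: t) := fun h => h1 (List.infix_cons h)
    have et : t = [] ∨ ∃ y, t = y ++ [false] := by
      rcases h2 with h | ⟨y, hy⟩
      · simp at h
      · cases y with
        | nil => exact Or.inl (by simpa using hy)
        | cons a b =>
          simp only [List.cons_append, List.cons.injEq] at hy
          exact Or.inr ⟨b, hy.2⟩
    simp [del, psi, ih nt et]
  | case4 t =>
    exact absurd (⟨[], t, by simp⟩ : [true,true] <:+: true :: true :: t) h1
  | case5 t ih =>
    have nt : ¬ ([true, true] <:+: t) := fun h => h1 (List.infix_cons (List.infix_cons h))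
    have et : t = [] ∨ ∃ y, t = y ++ [false] := by
      rcases h2 with h | ⟨y, hy⟩
      · simp at h
      · cases y with
        | nil => simp at hy
        | cons a b =>
          cases b with
          | nil =>
            simp only [List.cons_append, List.nil_append, List.cons.injEq] at hy
            exact Or.inl hy.2.2
          | cons c e =>
            simp only [List.cons_append, List.cons.injEq] at hy
            exact Or.inr ⟨e, hy.2.2⟩
    simp [del, psi, ih nt et]

/-! ### Prefix counting function -/

def Pc (l : List Bool) (m : ℕ) : ℕ := (l.take m).count true

@[simp] lemma Pc_zero (l : List Bool) : Pc l 0 = 0 := rfl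
@[simp] lemma Pc_nil (m : ℕ) : Pc [] m = 0 := by simp [Pc]
@[simp] lemma Pc_false (l : List Bool) (m : ℕ) : Pc (false :: l) (m+1) = Pc l m := by
  simp [Pc, List.count_cons]
@[simp] lemma Pc_true (l : List Bool) (m : ℕ) : Pc (true :: l) (m+1) = Pc l m + 1 := by
  simp [Pc, List.count_cons]

lemma Pc_le (l : List Bool) (m : ℕ) : Pc l m ≤ m := by
  calc (l.take m).count true ≤ (l.take m).length := List.count_le_length
  _ ≤ m := List.length_take_le _ _

lemma Pc_mono (l : List Bool) {i j : ℕ} (h : i ≤ j) : Pc l i ≤ Pc l j := by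
  have : l.take i = (l.take j).take i := by rw [List.take_take, Nat.min_eq_left h]
  unfold Pc
  rw [this]
  exact (List.take_sublist _ _).count_le _

lemma Pc_succ_le (l : List Bool) (i : ℕ) : Pc l (i+1) ≤ Pc l i + 1 := by
  unfold Pc
  rw [List.take_succ]
  rcases h : l[i]? with _ | b
  · simp
  · rw [List.count_append]
    cases b <;> simp

lemma lemC (v : List Bool) : ∀ m : ℕ, Pc (psi v) m ≤ Pc v (m + 1 - Pc (psi v) m) := by
  induction v with
  | nil => intro m; simp [psi]
  | cons x t ih =>
    intro m
    cases x
    · cases m with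
      | zero => simp
      | succ m' =>
        show Pc (false :: psi t) (m'+1) ≤ Pc (false :: t) (m' + 1 + 1 - Pc (false :: psi t) (m'+1))
        rw [Pc_false]
        have h1 : Pc (psi t) m' ≤ m' := Pc_le _ _
        have h2 := ih m'
        have h3 : m' + 1 + 1 - Pc (psi t) m' = (m' + 1 - Pc (psi t) m') + 1 := by omega
        rw [h3, Pc_false]
        exact h2
    · cases m with
      | zero => simp
      | succ m' =>
        cases m' with
        | zero =>
          show Pc (true :: false :: psi t) 1 ≤ _
          have : Pc (true :: false :: psi t) 1 = 1 := by
            show Pc (true :: false :: psi t) (0+1) = 1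
            rw [Pc_true]; simp
          rw [this]
          show 1 ≤ Pc (true :: t) 1
          show 1 ≤ Pc (true :: t) (0+1)
          rw [Pc_true]; omega
        | succ m'' =>
          show Pc (true :: false :: psi t) (m''+1+1) ≤
            Pc (true :: t) (m''+1+1 + 1 - Pc (true :: false :: psi t) (m''+1+1))
          rw [Pc_true, Pc_false]
          have h1 : Pc (psi t) m'' ≤ m'' := Pc_le _ _
          have h2 := ih m''
          have h3 : m'' + 1 + 1 + 1 - (Pc (psi t) m'' + 1) =
              (m'' + 1 - Pc (psi t) m'') + 1 := by omega
          rw [h3, Pc_true]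
          omega

lemma lemE2 (v : List Bool) : ∀ j : ℕ, Pc v j ≤ Pc (psi v) (j + Pc v j - 1) := by
  induction v with
  | nil => intro j; simp
  | cons x t ih =>
    intro j
    cases x
    · cases j with
      | zero => simp
      | succ j' =>
        rw [Pc_false]
        rcases Nat.eq_zero_or_pos (Pc t j') with h | h
        · simp [h]
        · have h1 : j' + 1 + Pc t j' - 1 = (j' + Pc t j' - 1) + 1 := by omega
          rw [h1]
          show _ ≤ Pc (false :: psi t) _
          rw [Pc_false]
          exact ih j'
    · cases j with
      | zero => simp
      | succ j' =>
        rw [Pc_true]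
        have h1 : j' + 1 + (Pc t j' + 1) - 1 = (j' + Pc t j') + 1 := by omega
        rw [h1]
        show _ ≤ Pc (true :: false :: psi t) _
        rw [Pc_true]
        rcases Nat.eq_zero_or_pos (j' + Pc t j') with h | h
        · have hj : j' = 0 := by omega
          subst hj
          simp
        · have h2 : j' + Pc t j' = (j' + Pc t j' - 1) + 1 := by omega
          rw [h2, Pc_false]
          have := ih j'
          omega

lemma lemIVT (l : List Bool) : ∀ i k : ℕ, k ≤ Pc l i → ∃ j, j ≤ i ∧ Pc l j = k := by
  intro i
  induction i with
  | zero => intro k hk; simp at hk; exact ⟨0, le_refl _, by simp [hk]⟩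
  | succ i' ih =>
    intro k hk
    by_cases h : k ≤ Pc l i'
    · obtain ⟨j, hj1, hj2⟩ := ih k h
      exact ⟨j, by omega, hj2⟩
    · have := Pc_succ_le l i'
      have hk2 : Pc l (i'+1) = k := by omega
      exact ⟨i'+1, le_refl _, hk2⟩

/-! ### Decoding factors -/

lemma Dpre (v : List Bool) : ∀ W t : List Bool, W ++ t = psi v →
    ∃ u t', u ++ t' = v ∧ u.count true = W.count true ∧
      u.length + W.count true ≤ W.length + 1 := by
  induction v with
  | nil =>
    intro W t h
    simp [psi] at h
    exact ⟨[], [], rfl, by simp [h.1], by simp [h.1]⟩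
  | cons x r ih =>
    intro W t h
    cases x
    · cases W with
      | nil => exact ⟨[], false :: r, rfl, by simp, by simp⟩
      | cons w W₁ =>
        simp only [psi, List.cons_append, List.cons.injEq] at h
        obtain ⟨hw, h'⟩ := h
        subst hw
        obtain ⟨u₁, t₁, hu, hc, hl⟩ := ih W₁ t h'
        refine ⟨false :: u₁, t₁, by simp [hu], by simpa using hc, ?_⟩
        simp only [List.length_cons, List.count_cons]
        simp only [show (false == true) = false by simp]
        simp at hl ⊢
        omega
    · cases W with
      | nil => exact ⟨[], true :: r, rfl, by simp, by simp⟩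
      | cons w W₁ =>
        simp only [psi, List.cons_append, List.cons.injEq] at h
        obtain ⟨hw, h'⟩ := h
        subst hw
        cases W₁ with
        | nil =>
          refine ⟨[true], r, rfl, by simp, by simp⟩
        | cons w₂ W₂ =>
          simp only [List.cons_append, List.cons.injEq] at h'
          obtain ⟨hw₂, h''⟩ := h'
          subst hw₂
          obtain ⟨u₂, t₂, hu, hc, hl⟩ := ih W₂ t h''
          refine ⟨true :: u₂, t₂, by simp [hu], ?_, ?_⟩
          · simp [List.count_cons, hc]
          · simp only [List.length_cons, List.count_cons]
            simp at hl ⊢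
            omega

lemma Dinf (v : List Bool) : ∀ s W t : List Bool, s ++ W ++ t = psi v →
    ∃ u, u <:+: v ∧ u.count true = W.count true ∧
      u.length + W.count true ≤ W.length + 1 := by
  induction v with
  | nil =>
    intro s W t h
    simp [psi] at h
    exact ⟨[], ⟨[], [], rfl⟩, by simp [h.2.1], by simp [h.2.1]⟩
  | cons x r ih =>
    intro s W t h
    cases s with
    | nil =>
      simp only [List.nil_append] at h
      obtain ⟨u, t', hu, hc, hl⟩ := Dpre (x :: r) W t h
      exact ⟨u, ⟨[], t', by simp [hu]⟩, hc, hl⟩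
    | cons s₀ s₁ =>
      cases x
      · simp only [psi, List.cons_append, List.cons.injEq] at h
        obtain ⟨u, hinf, hc, hl⟩ := ih s₁ W t h.2
        exact ⟨u, List.infix_cons hinf, hc, hl⟩
      · simp only [psi, List.cons_append, List.cons.injEq] at h
        obtain ⟨hs₀, h'⟩ := h
        cases s₁ with
        | nil =>
          simp only [List.nil_append] at h'
          cases W with
          | nil => exact ⟨[], ⟨[], true :: r, rfl⟩, by simp, by simp⟩
          | cons w W₁ =>
            simp only [List.cons_append, List.cons.injEq] at h'
            obtain ⟨hw, h''⟩ := h'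
            subst hw
            obtain ⟨u₁, t₁, hu, hc, hl⟩ := Dpre r W₁ t h''
            refine ⟨u₁, ⟨[true], t₁, by simp [hu]⟩, by simpa using hc, ?_⟩
            simp only [List.count_cons]
            simp at hl ⊢
            omega
        | cons s₁₀ s₂ =>
          simp only [List.cons_append, List.cons.injEq] at h'
          obtain ⟨hs₁₀, h''⟩ := h'
          obtain ⟨u, hinf, hc, hl⟩ := ih s₂ W t h''
          exact ⟨u, List.infix_cons hinf, hc, hl⟩

/-! ### Prefix normality transfer -/

lemma pn_psi {v : List Bool} (hv : IsPrefixNormal v) : IsPrefixNormal (psi v) := by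
  intro u hu
  obtain ⟨s, t, hst⟩ := hu
  set k := u.count true with hk
  rcases Nat.eq_zero_or_pos k with h0 | h0
  · simp [← hk, h0]
  · obtain ⟨u₀, hinf, hc, hl⟩ := Dinf v s u t hst
    have hpn : k ≤ Pc v u₀.length := by
      rw [hk, ← hc]; exact hv u₀ hinf
    obtain ⟨j, hj, hjk⟩ := lemIVT v u₀.length k hpn
    have h2 : k ≤ Pc (psi v) (j + k - 1) := hjk ▸ lemE2 v j
    calc k ≤ Pc (psi v) (j + k - 1) := h2
      _ ≤ Pc (psi v) u.length := Pc_mono _ (by omega)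

lemma pn_of_psi {v : List Bool} (hv : IsPrefixNormal (psi v)) : IsPrefixNormal v := by
  intro u hu
  set k := u.count true with hk
  rcases Nat.eq_zero_or_pos k with h0 | h0
  · simp [← hk, h0]
  · have hune : u ≠ [] := by
      rintro rfl
      rw [hk] at h0
      simp at h0
    obtain ⟨z, hz⟩ := psi_concat u hune
    obtain ⟨s, t, hst⟩ := hu
    have hzcount : z.count true = k := by
      have := psi_count u
      rw [hz] at this
      simpa using this
    have hzlen : z.length = u.length + k - 1 := by
      have := psi_length u
      rw [hz] at this
      simp at this
      omega
    have hzinf : z <:+: psi v := by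
      refine ⟨psi s, [false] ++ psi t, ?_⟩
      rw [← hst, psi_append, psi_append, hz]
      simp
    have h1 : k ≤ Pc (psi v) z.length := hzcount ▸ hv z hzinf
    have h2 := lemC v z.length
    have h3 : z.length + 1 - Pc (psi v) z.length ≤ u.length := by omega
    calc k ≤ Pc (psi v) z.length := h1
      _ ≤ Pc v (z.length + 1 - Pc (psi v) z.length) := h2
      _ ≤ Pc v u.length := Pc_mono _ h3

lemma Pc_concat_false (x : List Bool) (m : ℕ) : Pc (x ++ [false]) m = Pc x m := by
  unfold Pc
  rw [List.take_append, List.count_append]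
  have : ((List.take (m - x.length) [false])).count true = 0 := by
    have := (List.take_sublist (m - x.length) [false]).count_le true
    simpa using this
  omega

lemma infix_concat_cases {u x : List Bool} {a : Bool} (h : u <:+: x ++ [a]) :
    u <:+: x ∨ ∃ u₁, u = u₁ ++ [a] ∧ u₁ <:+: x := by
  obtain ⟨s, t, hst⟩ := h
  rcases List.eq_nil_or_concat t with rfl | ⟨t₁, b, rfl⟩
  · rcases List.eq_nil_or_concat u with rfl | ⟨u₁, c, rfl⟩
    · exact Or.inl ⟨x, [], by simp⟩
    · simp only [List.concat_eq_append] at hst ⊢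
      simp only [List.append_nil] at hst
      rw [show s ++ (u₁ ++ [c]) = (s ++ u₁) ++ [c] by simp] at hst
      obtain ⟨hx, hc⟩ := List.append_inj' hst rfl
      simp only [List.cons.injEq] at hc
      exact Or.inr ⟨u₁, by rw [hc.1], ⟨s, [], by simp [hx]⟩⟩
  · simp only [List.concat_eq_append] at hst
    rw [show s ++ u ++ (t₁ ++ [b]) = (s ++ u ++ t₁) ++ [b] by simp] at hst
    obtain ⟨hx, _⟩ := List.append_inj' hst rfl
    exact Or.inl ⟨s, t₁, hx⟩

lemma pn_concat_iff (x : List Bool) :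
    IsPrefixNormal (x ++ [false]) ↔ IsPrefixNormal x := by
  constructor
  · intro h u hu
    have h2 := h u (hu.trans ⟨[], [false], by simp⟩)
    rwa [show ((x ++ [false]).take u.length).count true = Pc (x ++ [false]) u.length from rfl,
      Pc_concat_false] at h2
  · intro h u hu
    rw [show ((x ++ [false]).take u.length).count true = Pc (x ++ [false]) u.length from rfl,
      Pc_concat_false]
    rcases infix_concat_cases hu with h1 | ⟨u₁, rfl, h1⟩
    · exact h u h1
    · have : u₁.count true = (u₁ ++ [false]).count true := by simp
      rw [← this]
      calc u₁.count true ≤ Pc x u₁.length := h u₁ h1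
        _ ≤ Pc x (u₁ ++ [false]).length := Pc_mono _ (by simp)

/-! ### Small facts -/

lemma pn_true : IsPrefixNormal [true] := by
  intro u hu
  have h1 : u.count true ≤ 1 := by simpa using hu.sublist.count_le true
  cases u with
  | nil => simp
  | cons a b =>
    show _ ≤ Pc [true] (b.length + 1)
    have : 1 ≤ Pc [true] (b.length + 1) := by
      show 1 ≤ Pc (true :: []) (b.length + 1)
      rw [Pc_true]; omega
    omega

lemma pn_tf : IsPrefixNormal [true, false] := by
  intro u hu
  have h1 : u.count true ≤ 1 := by simpa using hu.sublist.count_le true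
  cases u with
  | nil => simp
  | cons a b =>
    show _ ≤ Pc [true, false] (b.length + 1)
    have : 1 ≤ Pc [true, false] (b.length + 1) := by
      show 1 ≤ Pc (true :: [false]) (b.length + 1)
      rw [Pc_true]; omega
    omega

lemma pn_head {v : List Bool} (hpn : IsPrefixNormal v) (h : 0 < v.count true) :
    ∃ v₁, v = true :: v₁ := by
  have hm : true ∈ v := by
    by_contra hm
    rw [List.count_eq_zero_of_not_mem hm] at h
    omega
  obtain ⟨s, t, rfl⟩ := List.append_of_mem hm
  have h1 := hpn [true] ⟨s, t, by simp⟩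
  cases s with
  | nil => exact ⟨t, rfl⟩
  | cons a s' =>
    cases a
    · exfalso
      simp [List.cons_append] at h1
    · exact ⟨s' ++ true :: t, rfl⟩

lemma noTT_of_pn {w' : List Bool} (hpn : IsPrefixNormal ([true, false] ++ w')) :
    ¬ ([true, true] <:+: ([true, false] ++ w')) := by
  intro hinf
  have h := hpn [true, true] hinf
  have h2 : (([true, false] ++ w').take 2) = [true, false] := by
    show ((true :: false :: w').take 2) = [true, false]
    simp
  rw [show ([true,true] : List Bool).length = 2 from rfl, h2] at h
  simp at h

lemma noTT_concat {x : List Bool} (h : ¬ ([true, true] <:+: x)) :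
    ¬ ([true, true] <:+: x ++ [false]) := by
  intro hinf
  rcases infix_concat_cases hinf with h1 | ⟨u₁, he, _⟩
  · exact h h1
  · rcases u₁ with _ | ⟨a, _ | ⟨b, c⟩⟩ <;> simp at he

/-! ### Main theorem -/

theorem ext_ten_eq_pnwd (n d : ℕ) (hn : 1 ≤ n) (hd1 : 1 ≤ d) (hdn : d ≤ n) :
    Nat.card {w' : List Bool // w'.length = n + d - 3 ∧
        IsPrefixNormal ([true, false] ++ w') ∧
        ([true, false] ++ w').count true = d} = pnwd n d := by
  rw [pnwd]
  rcases Nat.lt_or_ge (n + d) 3 with h3 | h3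
  · -- special case n = d = 1
    have hn1 : n = 1 := by omega
    have hd1' : d = 1 := by omega
    subst hn1; subst hd1'
    refine Nat.card_congr ?_
    refine ⟨fun _ => ⟨[true], by simp, by simp, pn_true⟩,
      fun _ => ⟨[], by simp, by simpa using pn_tf, by simp⟩, ?_, ?_⟩
    · rintro ⟨w', hw1, hw2, hw3⟩
      apply Subtype.ext
      simpa using (List.length_eq_zero_iff.mp (by simpa using hw1)).symm
    · rintro ⟨w, hw1, hw2, hw3⟩
      apply Subtype.ext
      obtain ⟨a, rfl⟩ := List.length_eq_one_iff.mp hw1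
      cases a
      · simp at hw2
      · rfl
  · -- main case
    have h2n : 2 ≤ n := by omega
    refine Nat.card_congr ?_
    refine ⟨fun a => ⟨del (([true, false] ++ a.val) ++ [false]), ?_⟩,
      fun b => ⟨((psi b.val).dropLast).drop 2, ?_⟩, ?_, ?_⟩
    · -- membership for decode
      obtain ⟨w', hw1, hw2, hw3⟩ := a
      have hND := noTT_concat (noTT_of_pn hw2)
      have hdel : psi (del (([true, false] ++ w') ++ [false])) = ([true, false] ++ w') ++ [false] :=
        psi_del _ hND (Or.inr ⟨_, rfl⟩)
      set v := del (([true, false] ++ w') ++ [false]) with hv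
      have hcnt : v.count true = d := by
        have h1 := psi_count v
        rw [hdel, List.count_append, hw3] at h1
        simpa using h1.symm
      have hlen : v.length = n := by
        have h1 := psi_length v
        rw [hdel] at h1
        have h2 : (([true, false] ++ w') ++ [false]).length = w'.length + 3 := by simp
        rw [h2, hcnt] at h1
        omega
      refine ⟨hlen, hcnt, ?_⟩
      apply pn_of_psi
      rw [hdel]
      exact (pn_concat_iff _).mpr hw2
    · -- membership for encode
      obtain ⟨w, hw1, hw2, hw3⟩ := b
      obtain ⟨v₁, rfl⟩ := pn_head hw3 (by omega)
      have hv₁ : v₁ ≠ [] := by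
        intro h
        subst h
        simp at hw1
        omega
      obtain ⟨z, hz⟩ := psi_concat v₁ hv₁
      have hrepr : psi (true :: v₁) = ([true, false] ++ z) ++ [false] := by
        show true :: false :: psi v₁ = _
        rw [hz]
        simp
      have hdrop : ((psi (true :: v₁)).dropLast).drop 2 = z := by
        rw [hrepr, List.dropLast_concat]
        simp
      rw [hdrop]
      have hzc : z.count true = d - 1 := by
        have h1 := psi_count v₁
        rw [hz] at h1
        simp only [List.count_append] at h1
        simp at h1
        have h2 : (true :: v₁).count true = v₁.count true + 1 := by
          simp [List.count_cons]
        rw [hw2] at h2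
        omega
      have hzl : z.length = n + d - 3 := by
        have h1 := psi_length v₁
        rw [hz] at h1
        simp only [List.length_append] at h1
        have h2 : (true :: v₁).length = v₁.length + 1 := rfl
        rw [hw1] at h2
        have h3 : (true :: v₁).count true = v₁.count true + 1 := by
          simp [List.count_cons]
        rw [hw2] at h3
        simp at h1
        omega
      refine ⟨hzl, ?_, ?_⟩
      · have : ([true, false] ++ z) ++ [false] = psi (true :: v₁) := hrepr.symm
        rw [← pn_concat_iff]
        rw [this]
        exact pn_psi hw3
      · simp only [List.count_append]
        simp [hzc]
        omega
    · -- left inverse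
      rintro ⟨w', hw1, hw2, hw3⟩
      apply Subtype.ext
      simp only
      have hND := noTT_concat (noTT_of_pn hw2)
      have hdel : psi (del (([true, false] ++ w') ++ [false])) = ([true, false] ++ w') ++ [false] :=
        psi_del _ hND (Or.inr ⟨_, rfl⟩)
      rw [hdel, List.dropLast_concat]
      simp
    · -- right inverse
      rintro ⟨w, hw1, hw2, hw3⟩
      apply Subtype.ext
      simp only
      obtain ⟨v₁, rfl⟩ := pn_head hw3 (by omega)
      have hv₁ : v₁ ≠ [] := by
        intro h
        subst h
        simp at hw1
        omega
      obtain ⟨z, hz⟩ := psi_concat v₁ hv₁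
      have hrepr : psi (true :: v₁) = ([true, false] ++ z) ++ [false] := by
        show true :: false :: psi v₁ = _
        rw [hz]
        simp
      have hdrop : ((psi (true :: v₁)).dropLast).drop 2 = z := by
        rw [hrepr, List.dropLast_concat]
        simp
      rw [hdrop]
      rw [show ([true, false] ++ z) ++ [false] = psi (true :: v₁) from hrepr.symm]
      exact del_psi _
end

section
/- For all n ≥ 3, the number of binary words w' of length n such that the concatenation 1^(n−2)·0·1·w' is prefix normal equals 2^n − 5. -/
/-! ### Auxiliary lemmas -/

lemma count_take_mono (l : List Bool) {a b : ℕ} (h : a ≤ b) :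
    (l.take a).count true ≤ (l.take b).count true := by
  have hp : l.take a <+: l.take b := by
    refine ⟨(l.drop a).take (b - a), ?_⟩
    rw [← List.take_add]
    congr 1
    omega
  exact hp.sublist.count_le true

/-- Prefix normality is equivalent to subadditivity of prefix 1-counts. -/
lemma isPrefixNormal_iff_subadd (W : List Bool) :
    IsPrefixNormal W ↔ ∀ p i : ℕ,
      (W.take (p + i)).count true ≤ (W.take p).count true + (W.take i).count true := by
  constructor
  · intro h p i
    rw [List.take_add, List.count_append]
    have hinf : (W.drop p).take i <:+: W :=
      (List.take_prefix i (W.drop p)).isInfix.trans (List.drop_suffix p W).isInfix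
    have h1 := h _ hinf
    have h2 : ((W.drop p).take i).length ≤ i := by
      simp [List.length_take]
    exact Nat.add_le_add_left (h1.trans (count_take_mono W h2)) _
  · intro h u hu
    obtain ⟨a, b, hab⟩ := hu
    have := h a.length u.length
    have h1 : W.take (a.length + u.length) = a ++ u := by
      rw [← hab, List.append_assoc, List.take_add, List.take_left, List.drop_left,
        List.take_left]
    have h2 : W.take a.length = a := by
      rw [← hab]
      rw [show a ++ u ++ b = a ++ (u ++ b) by simp, List.take_left]
    rw [h1, h2, List.count_append] at this
    omega

/-- prefix 1-count of `w` -/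
def scnt (w : List Bool) (m : ℕ) : ℕ := (w.take m).count true

lemma scnt_mono (w : List Bool) {a b : ℕ} (h : a ≤ b) : scnt w a ≤ scnt w b :=
  count_take_mono w h

lemma scnt_le (w : List Bool) (a : ℕ) : scnt w a ≤ a :=
  List.count_le_length.trans (by simp [List.length_take])

lemma scnt_add_le (w : List Bool) (a b : ℕ) : scnt w (a + b) ≤ scnt w a + b := by
  unfold scnt
  rw [List.take_add, List.count_append]
  have : ((w.drop a).take b).count true ≤ b :=
    List.count_le_length.trans (by simp [List.length_take])
  omega

lemma scnt_clamp (w : List Bool) {a : ℕ} (h : w.length ≤ a) : scnt w a = scnt w w.length := by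
  unfold scnt
  rw [List.take_of_length_le h, List.take_length]

/-! ### Prefix counts of `1^(k+1) 0 1 w` -/

section Cformulas

variable (k : ℕ) (w : List Bool)

def bigW (k : ℕ) (w : List Bool) : List Bool :=
  List.replicate (k + 1) true ++ [false, true] ++ w

lemma C_small {j : ℕ} (hj : j ≤ k + 1) :
    ((bigW k w).take j).count true = j := by
  unfold bigW
  rw [List.append_assoc, List.take_append_of_le_length (by simp; omega),
    List.take_replicate, List.count_replicate]
  simp [Nat.min_eq_left hj]

lemma C_mid : ((bigW k w).take (k + 2)).count true = k + 1 := by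
  unfold bigW
  rw [List.append_assoc, show k + 2 = (k+1) + 1 by ring, List.take_add,
    List.take_append_of_le_length (by simp), List.take_replicate,
    List.drop_left' (by simp)]
  simp [List.count_replicate]

lemma C_big (m : ℕ) : ((bigW k w).take (k + 3 + m)).count true = k + 2 + scnt w m := by
  unfold bigW
  rw [show k + 3 + m = (k+3) + m by ring, List.take_add,
    List.take_left' (l₁ := List.replicate (k+1) true ++ [false, true]) (by simp),
    List.drop_left' (l₁ := List.replicate (k+1) true ++ [false, true]) (by simp),
    List.count_append, List.count_append, List.count_replicate]
  simp [scnt]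

end Cformulas


/-! ### Subadditivity under the two conditions -/

lemma C_zero (k : ℕ) (w : List Bool) : ((bigW k w).take 0).count true = 0 := by simp

lemma key_f (k : ℕ) (w : List Bool) (hw : w.length = k + 3)
    (h1 : scnt w (k + 1) ≤ k) (h2 : scnt w (k + 3) ≤ scnt w 1 + (k + 1)) (m : ℕ) :
    scnt w (m + (k + 2)) ≤ scnt w m + (k + 1) := by
  rcases Nat.eq_zero_or_pos m with rfl | hm
  · simp only [Nat.zero_add]
    have ha : scnt w (k + 1 + 1) ≤ scnt w (k + 1) + 1 := scnt_add_le w (k + 1) 1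
    have hb : k + 1 + 1 = k + 2 := rfl
    rw [hb] at ha
    omega
  · have hc : scnt w (m + (k + 2)) = scnt w (k + 3) := by
      rw [scnt_clamp w (by omega), hw]
    have hm1 : scnt w 1 ≤ scnt w m := scnt_mono w hm
    omega

lemma subadd_half (k : ℕ) (w : List Bool) (hw : w.length = k + 3)
    (h1 : scnt w (k + 1) ≤ k) (h2 : scnt w (k + 3) ≤ scnt w 1 + (k + 1))
    (p i : ℕ) (hpi : p ≤ i) :
    ((bigW k w).take (p + i)).count true ≤
      ((bigW k w).take p).count true + ((bigW k w).take i).count true := by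
  rcases Nat.eq_zero_or_pos p with rfl | hp
  · rw [Nat.zero_add, C_zero, Nat.zero_add]
  rcases Nat.lt_or_ge i (k + 2) with hi | hi
  · rcases Nat.lt_or_ge (p + i) (k + 2) with hs | hs
    · rw [C_small k w (by omega : p + i ≤ k + 1), C_small k w (by omega : p ≤ k + 1),
        C_small k w (by omega : i ≤ k + 1)]
    · rcases Nat.eq_or_lt_of_le hs with hs2 | hs2
      · rw [show p + i = k + 2 by omega, C_mid,
          C_small k w (by omega : p ≤ k + 1), C_small k w (by omega : i ≤ k + 1)]
        omega
      · obtain ⟨m, hm⟩ : ∃ m, p + i = k + 3 + m := ⟨p + i - (k + 3), by omega⟩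
        rw [hm, C_big, C_small k w (by omega : p ≤ k + 1), C_small k w (by omega : i ≤ k + 1)]
        have := scnt_le w m
        omega
  rcases Nat.eq_or_lt_of_le hi with hi2 | hi2
  · rcases Nat.lt_or_ge p (k + 2) with hp2 | hp2
    · obtain ⟨q, rfl⟩ : ∃ q, p = q + 1 := ⟨p - 1, by omega⟩
      rw [← hi2, show q + 1 + (k + 2) = k + 3 + q by ring, C_big,
        C_small k w (by omega : q + 1 ≤ k + 1), C_mid]
      have := scnt_le w q
      omega
    · have hpk : p = k + 2 := by omega
      rw [hpk, ← hi2, show k + 2 + (k + 2) = k + 3 + (k + 1) by ring, C_big, C_mid]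
      omega
  · obtain ⟨m, rfl⟩ : ∃ m, i = k + 3 + m := ⟨i - (k + 3), by omega⟩
    rcases Nat.lt_or_ge p (k + 2) with hp2 | hp2
    · rw [show p + (k + 3 + m) = k + 3 + (m + p) by ring, C_big,
        C_small k w (by omega : p ≤ k + 1), C_big]
      have := scnt_add_le w m p
      omega
    rcases Nat.eq_or_lt_of_le hp2 with hp3 | hp3
    · rw [← hp3, show k + 2 + (k + 3 + m) = k + 3 + (m + (k + 2)) by ring, C_big, C_mid, C_big]
      have := key_f k w hw h1 h2 m
      omega
    · obtain ⟨a, rfl⟩ : ∃ a, p = k + 3 + a := ⟨p - (k + 3), by omega⟩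
      rw [show k + 3 + a + (k + 3 + m) = k + 3 + (a + (k + 3) + m) by ring, C_big, C_big, C_big]
      have hc : scnt w (a + (k + 3) + m) = scnt w (k + 3) := by
        rw [scnt_clamp w (by omega), hw]
      have hs3 : scnt w (k + 1 + 2) ≤ scnt w (k + 1) + 2 := scnt_add_le w (k + 1) 2
      have hb : k + 1 + 2 = k + 3 := rfl
      rw [hb] at hs3
      omega

/-- Characterization of prefix normality of `1^(k+1) 0 1 w`. -/
lemma pn_char (k : ℕ) (w : List Bool) (hw : w.length = k + 3) :
    IsPrefixNormal (bigW k w) ↔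
      (w.take (k + 1)).count true ≤ k ∧ (w.drop 1).count true ≤ k + 1 := by
  have hsplit : scnt w (k + 3) = scnt w 1 + (w.drop 1).count true := by
    unfold scnt
    rw [List.take_of_length_le (by omega)]
    conv_lhs => rw [← List.take_append_drop 1 w]
    rw [List.count_append]
  rw [isPrefixNormal_iff_subadd]
  constructor
  · intro h
    have ha := h (k + 2) (k + 2)
    rw [show k + 2 + (k + 2) = k + 3 + (k + 1) by ring, C_big, C_mid] at ha
    have hb := h (k + 4) (k + 2)
    rw [show k + 4 + (k + 2) = k + 3 + (k + 3) by ring, show k + 4 = k + 3 + 1 by ring,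
      C_big, C_big, C_mid] at hb
    have h1 : scnt w (k + 1) ≤ k := by omega
    exact ⟨h1, by omega⟩
  · rintro ⟨h1, h2⟩ p i
    have h2' : scnt w (k + 3) ≤ scnt w 1 + (k + 1) := by omega
    rcases le_total p i with hle | hle
    · exact subadd_half k w hw h1 h2' p i hle
    · have := subadd_half k w hw h1 h2' i p hle
      rw [Nat.add_comm i p] at this
      omega

/-! ### Counting -/

def vA (k : ℕ) (x y : Bool) : List.Vector Bool (k + 3) :=
  ⟨List.replicate (k + 1) true ++ [x, y], by simp⟩

def vB (k : ℕ) : List.Vector Bool (k + 3) :=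
  ⟨false :: List.replicate (k + 2) true, by simp⟩

lemma list_ne_vB (k : ℕ) (x y : Bool) :
    List.replicate (k + 1) true ++ [x, y] ≠ false :: List.replicate (k + 2) true := by
  intro h
  have h0 := congrArg (fun l => l[0]?) h
  rw [List.getElem?_append_left (by simp)] at h0
  simp at h0

lemma cons_replicate_eq (k : ℕ) :
    true :: List.replicate (k + 2) true = List.replicate (k + 1) true ++ [true, true] := by
  have h1 : true :: List.replicate (k + 2) true = List.replicate (k + 3) true :=
    (List.replicate_succ (a := true) (n := k + 2)).symm
  have h2 : List.replicate (k + 3) true =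
      List.replicate (k + 1) true ++ List.replicate 2 true := List.replicate_add (k + 1) 2 true
  rw [h1, h2]
  rfl

lemma vec_eq_iff {n : ℕ} (a b : List.Vector Bool n) : a = b ↔ a.toList = b.toList :=
  ⟨congrArg _, List.Vector.eq a b⟩

lemma bad_char (k : ℕ) (l : List Bool) (hl : l.length = k + 3) :
    ¬((l.take (k + 1)).count true ≤ k ∧ (l.drop 1).count true ≤ k + 1) ↔
      (l = List.replicate (k + 1) true ++ [true, true] ∨
       l = List.replicate (k + 1) true ++ [true, false] ∨
       l = List.replicate (k + 1) true ++ [false, true] ∨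
       l = List.replicate (k + 1) true ++ [false, false] ∨
       l = false :: List.replicate (k + 2) true) := by
  constructor
  · intro h
    rw [not_and_or] at h
    push_neg at h
    rcases h with h | h
    · have hlen : (l.take (k + 1)).length = k + 1 := by rw [List.length_take]; omega
      have hcle := List.count_le_length (a := true) (l := l.take (k + 1))
      have hcnt : (l.take (k + 1)).count true = (l.take (k + 1)).length := by omega
      have hrep : l.take (k + 1) = List.replicate (k + 1) true := by
        rw [List.eq_replicate_iff]
        exact ⟨hlen, fun b hb => (List.count_eq_length.mp hcnt b hb).symm⟩
      have hdl : (l.drop (k + 1)).length = 2 := by rw [List.length_drop]; omega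
      obtain ⟨x, y, hxy⟩ := List.length_eq_two.mp hdl
      have hle : l = List.replicate (k + 1) true ++ [x, y] := by
        conv_lhs => rw [← List.take_append_drop (k + 1) l]
        rw [hrep, hxy]
      cases x <;> cases y <;> tauto
    · obtain ⟨a, t, rfl⟩ : ∃ a t, l = a :: t := by
        cases l with
        | nil => simp at hl
        | cons a t => exact ⟨a, t, rfl⟩
      simp only [List.drop_one, List.tail_cons] at h
      have htl : t.length = k + 2 := by simp at hl; omega
      have hcle := List.count_le_length (a := true) (l := t)
      have hcnt : t.count true = t.length := by omega
      have hrep : t = List.replicate (k + 2) true := by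
        rw [List.eq_replicate_iff]
        exact ⟨htl, fun b hb => (List.count_eq_length.mp hcnt b hb).symm⟩
      subst hrep
      cases a
      · tauto
      · left
        exact cons_replicate_eq k
  · have htake : ∀ x y : Bool,
        ((List.replicate (k + 1) true ++ [x, y]).take (k + 1)).count true = k + 1 := by
      intro x y
      rw [List.take_left' (by simp)]
      simp
    rintro (rfl | rfl | rfl | rfl | rfl) <;> rintro ⟨h1, h2⟩
    · rw [htake] at h1; omega
    · rw [htake] at h1; omega
    · rw [htake] at h1; omega
    · rw [htake] at h1; omega
    · simp at h2

theorem ext_ones_zero_one (n : ℕ) (hn : 3 ≤ n) :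
    Nat.card {w' : List Bool // w'.length = n ∧
        IsPrefixNormal (List.replicate (n - 2) true ++ [false, true] ++ w')} =
      2 ^ n - 5 := by
  obtain ⟨k, rfl⟩ : ∃ k, n = k + 3 := ⟨n - 3, by omega⟩
  simp only [show k + 3 - 2 = k + 1 by omega]
  have e1 : {w' : List Bool // w'.length = k + 3 ∧
      IsPrefixNormal (List.replicate (k + 1) true ++ [false, true] ++ w')} ≃
      {v : List.Vector Bool (k + 3) //
        (v.1.take (k + 1)).count true ≤ k ∧ (v.1.drop 1).count true ≤ k + 1} :=
    { toFun := fun x => ⟨⟨x.1, x.2.1⟩, (pn_char k x.1 x.2.1).mp x.2.2⟩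
      invFun := fun v => ⟨v.1.1, v.1.2, (pn_char k v.1.1 v.1.2).mpr v.2⟩
      left_inv := fun x => rfl
      right_inv := fun v => rfl }
  rw [Nat.card_congr e1, Nat.card_eq_fintype_card, Fintype.card_subtype]
  have htot := Finset.card_filter_add_card_filter_not
    (s := (Finset.univ : Finset (List.Vector Bool (k + 3))))
    (p := fun v => (v.1.take (k + 1)).count true ≤ k ∧ (v.1.drop 1).count true ≤ k + 1)
  have huniv : (Finset.univ : Finset (List.Vector Bool (k + 3))).card = 2 ^ (k + 3) := by
    simp [Finset.card_univ, card_vector]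
  have hbad : (Finset.univ.filter (fun v : List.Vector Bool (k + 3) =>
      ¬((v.1.take (k + 1)).count true ≤ k ∧ (v.1.drop 1).count true ≤ k + 1))).card = 5 := by
    have hset : Finset.univ.filter (fun v : List.Vector Bool (k + 3) =>
        ¬((v.1.take (k + 1)).count true ≤ k ∧ (v.1.drop 1).count true ≤ k + 1)) =
        {vA k true true, vA k true false, vA k false true, vA k false false, vB k} := by
      ext v
      simp only [Finset.mem_filter, Finset.mem_univ, true_and, Finset.mem_insert,
        Finset.mem_singleton, vec_eq_iff]
      simp only [vA, vB, List.Vector.toList_mk]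
      obtain ⟨l, hl⟩ := v
      exact bad_char k l hl
    rw [hset]
    rw [Finset.card_insert_of_notMem (by simp only [Finset.mem_insert, Finset.mem_singleton, vec_eq_iff]; simp [vA, vB, vec_eq_iff, List.Vector.toList_mk, List.append_right_inj, list_ne_vB]),
      Finset.card_insert_of_notMem (by simp only [Finset.mem_insert, Finset.mem_singleton, vec_eq_iff]; simp [vA, vB, vec_eq_iff, List.Vector.toList_mk, List.append_right_inj, list_ne_vB]),
      Finset.card_insert_of_notMem (by simp only [Finset.mem_insert, Finset.mem_singleton, vec_eq_iff]; simp [vA, vB, vec_eq_iff, List.Vector.toList_mk, List.append_right_inj, list_ne_vB]),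
      Finset.card_insert_of_notMem (by simp only [Finset.mem_insert, Finset.mem_singleton, vec_eq_iff]; simp [vA, vB, vec_eq_iff, List.Vector.toList_mk, List.append_right_inj, list_ne_vB]),
      Finset.card_singleton]
  omega
end

section
/- For all n ≥ 2, the number of binary words w' of length n such that the concatenation 1^(n−2)·0·0·w' is prefix normal equals 2^n − (n+1). -/
/-! ### Auxiliary lemmas -/

lemma f_eq (K : ℕ) (w' : List Bool) (j : ℕ) :
    ((List.replicate K true ++ [false, false] ++ w').take j).count true
      = min j K + (w'.take (j - (K + 2))).count true := by
  rw [List.take_append, List.take_append]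
  rw [List.count_append, List.count_append, List.take_replicate, List.count_replicate]
  have h2 : (([false, false] : List Bool).take (j - K)).count true = 0 := by
    have := ((([false, false] : List Bool)).take_sublist (j - K)).count_le true
    simpa using this
  simp [h2]

lemma f_subadd (K : ℕ) (w' : List Bool) (hcnt : w'.count true ≤ K) (i L : ℕ) :
    ((List.replicate K true ++ [false, false] ++ w').take (i + L)).count true ≤
      ((List.replicate K true ++ [false, false] ++ w').take i).count true +
        ((List.replicate K true ++ [false, false] ++ w').take L).count true := by
  have hc : ∀ m, (w'.take m).count true ≤ K := fun m =>
    le_trans ((w'.take_sublist m).count_le true) hcnt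
  have hcm : ∀ m, (w'.take m).count true ≤ m := fun m =>
    le_trans (List.count_le_length) (by simpa using List.length_take_le m w')
  have hsplit : ∀ a b : ℕ, (w'.take (a + b)).count true ≤ (w'.take a).count true + min b K := by
    intro a b
    rw [List.take_add, List.count_append]
    have h1 : ((w'.drop a).take b).count true ≤ b :=
      le_trans (List.count_le_length) (by simpa using List.length_take_le b (w'.drop a))
    have h2 : ((w'.drop a).take b).count true ≤ K :=
      le_trans ((((w'.drop a).take_sublist b).trans (w'.drop_sublist a)).count_le true) hcnt
    omega
  rw [f_eq, f_eq, f_eq]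
  rcases le_or_gt (i + L) (K + 2) with h | h
  · have e1 : i + L - (K + 2) = 0 := by omega
    have e2 : i - (K + 2) = 0 := by omega
    have e3 : L - (K + 2) = 0 := by omega
    rw [e1, e2, e3]
    simp only [List.take_zero, List.count_nil]
    omega
  rcases le_or_gt (K + 2) i with hi | hi
  · have e : i + L - (K + 2) = (i - (K + 2)) + L := by omega
    rw [e]
    have := hsplit (i - (K + 2)) L
    omega
  rcases le_or_gt (K + 2) L with hL | hL
  · have e : i + L - (K + 2) = (L - (K + 2)) + i := by omega
    rw [e]
    have := hsplit (L - (K + 2)) i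
    omega
  · have e2 : i - (K + 2) = 0 := by omega
    have e3 : L - (K + 2) = 0 := by omega
    rw [e2, e3]
    have h1 := hc (i + L - (K + 2))
    have h2 := hcm (i + L - (K + 2))
    simp only [List.take_zero, List.count_nil]
    omega

lemma key (n : ℕ) (hn : 2 ≤ n) (w' : List Bool) (hlen : w'.length = n) :
    IsPrefixNormal (List.replicate (n - 2) true ++ [false, false] ++ w')
      ↔ w'.count true ≤ n - 2 := by
  obtain ⟨K, rfl⟩ : ∃ K, n = K + 2 := ⟨n - 2, by omega⟩
  simp only [Nat.add_sub_cancel]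
  constructor
  · intro h
    have h1 := h w' ⟨List.replicate K true ++ [false, false], [], by simp⟩
    rw [hlen, f_eq] at h1
    simpa using h1
  · intro hcnt u hu
    obtain ⟨s, t, hst⟩ := hu
    have hw1 : (List.replicate K true ++ [false, false] ++ w').take (s.length + u.length)
        = s ++ u := by
      rw [← hst]
      simp [List.take_append]
    have hw2 : (List.replicate K true ++ [false, false] ++ w').take s.length = s := by
      rw [← hst]
      simp [List.take_append]
    have hsub := f_subadd K w' hcnt s.length u.length
    rw [hw1, hw2, List.count_append] at hsub
    omega

/-- The finset of all boolean lists of length `n`. -/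
def listsF : ℕ → Finset (List Bool)
  | 0 => {[]}
  | n + 1 => ((listsF n).image (false :: ·)) ∪ ((listsF n).image (true :: ·))

lemma mem_listsF (n : ℕ) (l : List Bool) : l ∈ listsF n ↔ l.length = n := by
  induction n generalizing l with
  | zero => simp [listsF, List.length_eq_zero_iff]
  | succ n ih =>
    simp only [listsF, Finset.mem_union, Finset.mem_image, ih]
    constructor
    · rintro (⟨a, ha, rfl⟩ | ⟨a, ha, rfl⟩) <;> simp [ha]
    · intro h
      cases l with
      | nil => simp at h
      | cons b tl =>
        cases b
        · exact Or.inl ⟨tl, by simpa using h, rfl⟩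
        · exact Or.inr ⟨tl, by simpa using h, rfl⟩

lemma listsF_filter_card (n : ℕ) (p : List Bool → Prop) [DecidablePred p] :
    ((listsF (n + 1)).filter p).card
      = ((listsF n).filter (fun l => p (false :: l))).card
        + ((listsF n).filter (fun l => p (true :: l))).card := by
  have hinjf : Function.Injective (false :: · : List Bool → List Bool) :=
    fun a b h => by injection h
  have hinjt : Function.Injective (true :: · : List Bool → List Bool) :=
    fun a b h => by injection h
  show (((listsF n).image (false :: ·) ∪ (listsF n).image (true :: ·)).filter p).card = _
  rw [Finset.filter_union, Finset.card_union_of_disjoint, Finset.filter_image,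
    Finset.filter_image, Finset.card_image_of_injective _ hinjf,
    Finset.card_image_of_injective _ hinjt]
  · simp only [Finset.disjoint_left, Finset.mem_filter, Finset.mem_image]
    rintro l ⟨⟨a, _, rfl⟩, -⟩ ⟨⟨b, _, hb⟩, -⟩
    simp at hb

lemma card_listsF (n : ℕ) : (listsF n).card = 2 ^ n := by
  induction n with
  | zero => simp [listsF]
  | succ n ih =>
    have h := listsF_filter_card n (fun _ => True)
    simp only [Finset.filter_true] at h
    rw [h, ih, pow_succ]
    omega

lemma A1 (n : ℕ) : ((listsF n).filter (fun l => 1 ≤ l.count false)).card = 2 ^ n - 1 := by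
  induction n with
  | zero => simp [listsF, Finset.filter_singleton]
  | succ n ih =>
    rw [listsF_filter_card]
    have e1 : ((listsF n).filter (fun l => 1 ≤ (false :: l).count false)).card = 2 ^ n := by
      rw [Finset.filter_true_of_mem (fun l _ => by simp [List.count_cons])]
      exact card_listsF n
    have e2 : ((listsF n).filter (fun l => 1 ≤ (true :: l).count false))
        = (listsF n).filter (fun l => 1 ≤ l.count false) :=
      Finset.filter_congr (fun l _ => by simp [List.count_cons])
    rw [e1, e2, ih]
    have : 0 < 2 ^ n := Nat.two_pow_pos n
    rw [pow_succ]
    omega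

lemma A2 (n : ℕ) : ((listsF n).filter (fun l => 2 ≤ l.count false)).card = 2 ^ n - (n + 1) := by
  induction n with
  | zero => simp [listsF, Finset.filter_singleton]
  | succ n ih =>
    rw [listsF_filter_card]
    have e1 : ((listsF n).filter (fun l => 2 ≤ (false :: l).count false))
        = (listsF n).filter (fun l => 1 ≤ l.count false) :=
      Finset.filter_congr (fun l _ => by simp [List.count_cons])
    have e2 : ((listsF n).filter (fun l => 2 ≤ (true :: l).count false))
        = (listsF n).filter (fun l => 2 ≤ l.count false) :=
      Finset.filter_congr (fun l _ => by simp [List.count_cons])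
    rw [e1, e2, ih, A1]
    have : n < 2 ^ n := Nat.lt_two_pow_self
    rw [pow_succ]
    omega

lemma count_tf (l : List Bool) : l.count true + l.count false = l.length := by
  induction l with
  | nil => simp
  | cons b t ih => cases b <;> simp [List.count_cons] <;> omega

theorem ext_ones_zero_zero (n : ℕ) (hn : 2 ≤ n) :
    Nat.card {w' : List Bool // w'.length = n ∧
        IsPrefixNormal (List.replicate (n - 2) true ++ [false, false] ++ w')} =
      2 ^ n - (n + 1) := by
  have hiff : ∀ w' : List Bool,
      (w'.length = n ∧
        IsPrefixNormal (List.replicate (n - 2) true ++ [false, false] ++ w'))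
        ↔ w' ∈ (listsF n).filter (fun l => 2 ≤ l.count false) := by
    intro w'
    rw [Finset.mem_filter, mem_listsF]
    constructor
    · rintro ⟨h1, h2⟩
      refine ⟨h1, ?_⟩
      have hc := (key n hn w' h1).mp h2
      have hcf := count_tf w'
      omega
    · rintro ⟨h1, h2⟩
      refine ⟨h1, (key n hn w' h1).mpr ?_⟩
      have hcf := count_tf w'
      omega
  rw [Nat.card_congr (Equiv.subtypeEquivRight hiff), Nat.card_eq_finsetCard, A2]
end

section
/- For all even n ≥ 2, the number of binary words w' of length n such that the concatenation (10)^(n/2)·w' is prefix normal equals F(n+2), where F is the Fibonacci sequence with F(1) = F(2) = 1 and F(m+2) = F(m+1) + F(m). -/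
/-- `w` has no two consecutive ones. -/
def No11 (w : List Bool) : Prop := ¬ [true, true] <:+: w

lemma No11.mono {u w : List Bool} (h : No11 w) (hu : u <:+: w) : No11 u :=
  fun hc => h (hc.trans hu)

lemma no11_tail {a : Bool} {w : List Bool} (h : No11 (a :: w)) : No11 w :=
  h.mono ((List.suffix_cons a w).isInfix)

lemma no11_cons_false {w : List Bool} (h : No11 w) : No11 (false :: w) := by
  intro hc
  rcases List.infix_cons_iff.mp hc with h1 | h2
  · rcases h1 with ⟨t, ht⟩; simp at ht
  · exact h h2

lemma no11_cons_tf {w : List Bool} (h : No11 w) : No11 (true :: false :: w) := by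
  intro hc
  rcases List.infix_cons_iff.mp hc with h1 | h2
  · rcases h1 with ⟨t, ht⟩; simp at ht
  · exact no11_cons_false h h2

lemma no11_density : ∀ w : List Bool, No11 w → 2 * w.count true ≤ w.length + 1
  | [] => by simp
  | [true] => by simp
  | true :: true :: t => by
      intro h
      exact absurd ⟨[], t, rfl⟩ h
  | true :: false :: t => by
      intro h
      have := no11_density t (no11_tail (no11_tail h))
      simp [List.count_cons]
      omega
  | false :: t => by
      intro h
      have := no11_density t (no11_tail h)
      simp [List.count_cons]
      omega

lemma A_count (k : ℕ) : ((List.replicate k [true, false]).flatten).count true = k := by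
  induction k with
  | zero => simp
  | succ m ih => simp [List.replicate_succ, ih]

lemma A_length (k : ℕ) : ((List.replicate k [true, false]).flatten).length = 2 * k := by
  induction k with
  | zero => simp
  | succ m ih => simp [List.replicate_succ, ih]; omega

lemma A_take : ∀ (k i : ℕ), i ≤ 2 * k →
    (((List.replicate k [true, false]).flatten).take i).count true = (i + 1) / 2
  | 0, i => by intro hi; interval_cases i; simp
  | (k+1), 0 => by simp
  | (k+1), 1 => by
      intro _
      simp [List.replicate_succ]
  | (k+1), (i+2) => by
      intro hi
      have := A_take k i (by omega)
      simp only [List.replicate_succ, List.flatten_cons]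
      rw [show (i + 2) = [true, false].length + i by simp; omega, List.take_length_add_append]
      simp only [List.count_append, this]
      simp
      omega

lemma no11_A_append {k : ℕ} {w : List Bool} (h : No11 w) :
    No11 ((List.replicate k [true, false]).flatten ++ w) := by
  induction k with
  | zero => simpa
  | succ m ih => simpa [List.replicate_succ] using no11_cons_tf ih

lemma pn_of_no11 (k : ℕ) (w' : List Bool) (hlen : w'.length = 2 * k) (h : No11 w') :
    IsPrefixNormal ((List.replicate k [true, false]).flatten ++ w') := by
  set A := (List.replicate k [true, false]).flatten with hA
  intro u hu
  obtain ⟨s, t, hX⟩ := hu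
  have hAl : A.length = 2 * k := A_length k
  have hXlen : s.length + u.length + t.length = 2 * k + 2 * k := by
    have := congrArg List.length hX
    simp at this
    omega
  have hXno11 : No11 (A ++ w') := no11_A_append h
  by_cases hb : u.length ≤ 2 * k
  · -- short substring: use density on u and A_take on the prefix
    have hdu : 2 * u.count true ≤ u.length + 1 := no11_density u (hXno11.mono ⟨s, t, hX⟩)
    have htake : ((A ++ w').take u.length).count true = (u.length + 1) / 2 := by
      rw [List.take_append]
      rw [show u.length - A.length = 0 by omega]
      simp [hA, A_take k u.length hb]
    rw [htake]; omega
  · -- long substring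
    push_neg at hb
    set a := s.length with ha
    set j := u.length - 2 * k with hj
    have hjpos : 1 ≤ j := by omega
    have haj : a + j ≤ 2 * k := by omega
    -- u = A.drop a ++ w'.take (a + j)
    have hdropX : (A ++ w').drop a = u ++ t := by
      rw [← hX, List.append_assoc, ha, List.drop_left]
    have hu_eq : u = A.drop a ++ w'.take (a + j) := by
      have h1 : u = ((A ++ w').drop a).take u.length := by
        rw [hdropX, List.take_append, List.take_of_length_le (le_refl _),
          Nat.sub_self, List.take_zero, List.append_nil]
      rw [h1, List.drop_append, show a - A.length = 0 by omega,
        List.drop_zero, List.take_append,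
        List.take_of_length_le (by rw [List.length_drop]; omega)]
      congr 2
      rw [List.length_drop]
      omega
    -- counts
    have hAsplit : (A.take a).count true + (A.drop a).count true = k := by
      rw [← List.count_append, List.take_append_drop, hA, A_count]
    have hAta : (A.take a).count true = (a + 1) / 2 := A_take k a (by omega)
    have hwsplit : (w'.take (a + j)).count true
        = (w'.take j).count true + ((w'.drop j).take a).count true := by
      rw [show a + j = j + a by omega, List.take_add, List.count_append]
    have hmid : 2 * ((w'.drop j).take a).count true ≤ a + 1 := by
      have hinf : (w'.drop j).take a <:+: w' :=
        ((List.take_prefix a (w'.drop j)).isInfix).trans ((List.drop_suffix j w').isInfix)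
      have := no11_density _ (h.mono hinf)
      have hlm : ((w'.drop j).take a).length = a := by
        rw [List.length_take, List.length_drop]; omega
      omega
    have htakeX : ((A ++ w').take u.length).count true = k + (w'.take j).count true := by
      rw [List.take_append, List.take_of_length_le (by omega),
        List.count_append, show u.length - A.length = j by omega, hA, A_count]
    rw [htakeX, hu_eq, List.count_append, hwsplit]
    omega

lemma no11_of_pn (k : ℕ) (hk : 1 ≤ k) (w' : List Bool)
    (hpn : IsPrefixNormal ((List.replicate k [true, false]).flatten ++ w')) : No11 w' := by
  intro hc
  have hinf : [true, true] <:+: (List.replicate k [true, false]).flatten ++ w' :=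
    hc.trans (List.suffix_append _ w').isInfix
  have := hpn _ hinf
  obtain ⟨m, rfl⟩ := Nat.exists_eq_add_of_le' hk
  simp [List.replicate_succ] at this

/-- Finset of no-11 words of length n. -/
def S : ℕ → Finset (List Bool)
  | 0 => {[]}
  | 1 => {[false], [true]}
  | (n+2) => (S (n+1)).image (false :: ·) ∪ (S n).image (fun t => true :: false :: t)

lemma S_card : ∀ n, (S n).card = Nat.fib (n + 2)
  | 0 => by simp [S]
  | 1 => by rw [S]; decide
  | (n+2) => by
      rw [S, Finset.card_union_of_disjoint, Finset.card_image_of_injective,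
        Finset.card_image_of_injective, S_card (n+1), S_card n]
      · rw [show n + 1 + 2 = n + 2 + 1 from rfl, Nat.fib_add_two (n := n + 2)]
        omega
      · intro x y hxy; simpa using hxy
      · intro x y hxy; simpa using hxy
      · rw [Finset.disjoint_left]
        rintro a ha hb
        obtain ⟨x, _, rfl⟩ := Finset.mem_image.mp ha
        obtain ⟨y, _, hy⟩ := Finset.mem_image.mp hb
        simp at hy

lemma S_mem : ∀ n (w : List Bool), w ∈ S n ↔ (w.length = n ∧ No11 w)
  | 0, w => by
      simp only [S, Finset.mem_singleton, List.length_eq_zero_iff]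
      constructor
      · rintro rfl; exact ⟨rfl, by rintro ⟨s, t, h⟩; simp at h⟩
      · exact fun h => h.1
  | 1, w => by
      simp only [S, Finset.mem_insert, Finset.mem_singleton]
      constructor
      · rintro (rfl | rfl) <;>
          exact ⟨rfl, by rintro ⟨s, t, h⟩; apply_fun List.length at h; simp at h; omega⟩
      · rintro ⟨hl, -⟩
        match w, hl with
        | [b], _ => cases b <;> simp
  | (n+2), w => by
      rw [S]
      simp only [Finset.mem_union, Finset.mem_image]
      constructor
      · rintro (⟨t, ht, rfl⟩ | ⟨t, ht, rfl⟩)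
        · obtain ⟨hl, hn⟩ := (S_mem (n+1) t).mp ht
          exact ⟨by simp [hl], no11_cons_false hn⟩
        · obtain ⟨hl, hn⟩ := (S_mem n t).mp ht
          exact ⟨by simp [hl], no11_cons_tf hn⟩
      · rintro ⟨hl, hn⟩
        match w, hl with
        | (a :: b :: t), hl =>
          cases a with
          | false =>
            left
            exact ⟨b :: t, (S_mem (n+1) (b :: t)).mpr ⟨by simp only [List.length_cons] at hl ⊢; omega, no11_tail hn⟩, rfl⟩
          | true =>
            cases b with
            | true => exact absurd ⟨[], t, rfl⟩ hn
            | false =>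
              right
              exact ⟨t, (S_mem n t).mpr
                ⟨by simp only [List.length_cons] at hl ⊢; omega, no11_tail (no11_tail hn)⟩, rfl⟩

theorem ext_alternating_even (n : ℕ) (hn : 2 ≤ n) (heven : Even n) :
    Nat.card {w' : List Bool // w'.length = n ∧
        IsPrefixNormal ((List.replicate (n / 2) [true, false]).flatten ++ w')} =
      Nat.fib (n + 2) := by
  obtain ⟨k, hk⟩ := heven
  have hk2 : n = 2 * k := by omega
  have hkn : n / 2 = k := by omega
  have hk1 : 1 ≤ k := by omega
  have hiff : ∀ w' : List Bool,
      (w'.length = n ∧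
        IsPrefixNormal ((List.replicate (n / 2) [true, false]).flatten ++ w')) ↔ w' ∈ S n := by
    intro w'
    rw [S_mem, hkn]
    constructor
    · rintro ⟨hl, hpn⟩
      exact ⟨hl, no11_of_pn k hk1 w' hpn⟩
    · rintro ⟨hl, hno⟩
      exact ⟨hl, pn_of_no11 k w' (by omega) hno⟩
  rw [Nat.card_congr (Equiv.subtypeEquivRight hiff), Nat.card_eq_finsetCard, S_card]
end

section
/- For all n ≥ 2, the numbers of prefix normal words satisfy the recurrence pnw(n) = 2·pnw(n−1) − crit(n−1), where crit(m) is the number of extension-critical prefix normal words of length m. -/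
/-- The number of extension-critical prefix normal words of length `n`:
prefix normal words `w` such that `w1` is not prefix normal. -/
noncomputable def crit (n : ℕ) : ℕ :=
  Nat.card {w : List Bool // w.length = n ∧ IsPrefixNormal w ∧
    ¬ IsPrefixNormal (w ++ [true])}

lemma count_take_mono_s15 (L : List Bool) (a : Bool) {k k' : ℕ} (h : k ≤ k') :
    (L.take k).count a ≤ (L.take k').count a := by
  rw [← min_eq_left h, ← List.take_take]
  exact ((L.take k').take_sublist k).count_le a

lemma pn_of_pn_concat {v : List Bool} {b : Bool} (h : IsPrefixNormal (v ++ [b])) :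
    IsPrefixNormal v := by
  intro u hu
  have hlen : u.length ≤ v.length := hu.length_le
  have h2 := h u (hu.trans (List.prefix_append v [b]).isInfix)
  rwa [List.take_append_of_le_length hlen] at h2

lemma pn_concat_false {v : List Bool} (h : IsPrefixNormal v) :
    IsPrefixNormal (v ++ [false]) := by
  intro u hu
  obtain ⟨s, t, hst⟩ := hu
  rcases t.eq_nil_or_concat with rfl | ⟨t', x, rfl⟩
  · -- u is a suffix of v ++ [false]
    rcases u.eq_nil_or_concat with rfl | ⟨u', x, rfl⟩
    · simp
    · rw [List.append_nil] at hst
      have hx : s ++ u' = v ∧ [x] = [false] :=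
        List.append_inj' (by simpa [List.append_assoc] using hst) rfl
      obtain ⟨hsu, hxf⟩ := hx
      have hxf' : x = false := by simpa using hxf
      subst hxf'
      have hu'v : u' <:+: v := ⟨s, [], by simp [hsu]⟩
      have hlen' : u'.length ≤ v.length := hu'v.length_le
      have h1 := h u' hu'v
      have h2 : (v.take u'.length).count true
          ≤ ((v ++ [false]).take (u' ++ [false]).length).count true := by
        rw [← List.take_append_of_le_length hlen']
        exact count_take_mono_s15 _ _ (by simp)
      rw [List.concat_eq_append]
      calc (u' ++ [false]).count true = u'.count true := by simp
        _ ≤ _ := le_trans h1 h2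
  · -- u is an infix of v
    have hst' : s ++ u ++ t' = v :=
      (List.append_inj' (by simpa [List.append_assoc] using hst : (s ++ u ++ t') ++ [x] = v ++ [false]) rfl).1
    have huv : u <:+: v := ⟨s, t', hst'⟩
    have hlen : u.length ≤ v.length := huv.length_le
    rw [List.take_append_of_le_length hlen]
    exact h u huv

lemma finite_S (n : ℕ) (P : List Bool → Prop) :
    {w : List Bool | w.length = n ∧ P w}.Finite :=
  (List.finite_length_eq Bool n).subset fun _ hw => hw.1

theorem pnw_recurrence (n : ℕ) (hn : 2 ≤ n) :
    pnw n = 2 * pnw (n - 1) - crit (n - 1) := by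
  obtain ⟨m, rfl⟩ : ∃ m, n = m + 1 := ⟨n - 1, by omega⟩
  simp only [Nat.add_sub_cancel]
  set S : ℕ → Set (List Bool) := fun k => {w | w.length = k ∧ IsPrefixNormal w} with hS
  set A : Set (List Bool) :=
    {v | v.length = m ∧ IsPrefixNormal v ∧ IsPrefixNormal (v ++ [true])} with hA
  set C : Set (List Bool) :=
    {v | v.length = m ∧ IsPrefixNormal v ∧ ¬ IsPrefixNormal (v ++ [true])} with hC
  have hpnw : ∀ k, pnw k = (S k).ncard := fun k => (Nat.card_coe_set_eq _).symm ▸ rfl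
  have hcrit : crit m = C.ncard := (Nat.card_coe_set_eq _).symm ▸ rfl
  -- split S (m+1) by last letter
  have hsplit : S (m + 1) = ((· ++ [true]) '' A) ∪ ((· ++ [false]) '' (S m)) := by
    ext w
    constructor
    · rintro ⟨hlen, hpn⟩
      have hne : w ≠ [] := by intro h; simp [h] at hlen
      have hw : w.dropLast ++ [w.getLast hne] = w := List.dropLast_append_getLast hne
      have hdl : w.dropLast.length = m := by
        rw [List.length_dropLast, hlen]; rfl
      have hdlpn : IsPrefixNormal w.dropLast := pn_of_pn_concat (hw ▸ hpn)
      rcases Bool.eq_false_or_eq_true (w.getLast hne) with hb | hb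
      · left; exact ⟨w.dropLast, ⟨hdl, hdlpn, by rw [← hb, hw]; exact hpn⟩,
          by simp only []; rw [← hb]; exact hw⟩
      · right; exact ⟨w.dropLast, ⟨hdl, hdlpn⟩, by simp only []; rw [← hb]; exact hw⟩
    · rintro (⟨v, ⟨hv1, _, hv3⟩, rfl⟩ | ⟨v, ⟨hv1, hv2⟩, rfl⟩)
      · exact ⟨by simp [hv1], hv3⟩
      · exact ⟨by simp [hv1], pn_concat_false hv2⟩
  have hAfin : A.Finite := finite_S m _
  have hSmfin : (S m).Finite := finite_S m _
  have hCfin : C.Finite := finite_S m _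
  have hdisj : Disjoint ((· ++ [true]) '' A) ((· ++ [false]) '' (S m)) := by
    rw [Set.disjoint_left]
    rintro x ⟨v, _, rfl⟩ ⟨v', _, hx⟩
    have := congrArg List.getLast? hx
    simp [List.getLast?_concat] at this
  have hinj : ∀ b : Bool, Function.Injective (· ++ [b]) :=
    fun b => List.append_left_injective [b]
  have hcard1 : (S (m + 1)).ncard = A.ncard + (S m).ncard := by
    rw [hsplit, Set.ncard_union_eq hdisj (hAfin.image _) (hSmfin.image _),
      Set.ncard_image_of_injective _ (hinj true),
      Set.ncard_image_of_injective _ (hinj false)]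
  have hsplit2 : S m = A ∪ C := by
    ext v
    constructor
    · rintro ⟨h1, h2⟩
      by_cases h3 : IsPrefixNormal (v ++ [true])
      · exact Or.inl ⟨h1, h2, h3⟩
      · exact Or.inr ⟨h1, h2, h3⟩
    · rintro (⟨h1, h2, _⟩ | ⟨h1, h2, _⟩) <;> exact ⟨h1, h2⟩
  have hdisj2 : Disjoint A C := by
    rw [Set.disjoint_left]
    rintro v ⟨_, _, h3⟩ ⟨_, _, h3'⟩
    exact h3' h3
  have hcard2 : (S m).ncard = A.ncard + C.ncard := by
    rw [hsplit2, Set.ncard_union_eq hdisj2 hAfin hCfin]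
  rw [hpnw, hpnw, hcrit, hcard1, hcard2]
  omega
end
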